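/- arXiv:1108.6015 — 3 statements merged into one kernel-verified Lean document; each statement's English description precedes it below -/
import Mathlib

section
/- For every n ≥ 2, all roots of the polynomial S_n(x) = Σ_k S*(n,k) x^k are real and nonpositive, and each root has multiplicity one. -/
open Finset Polynomial

/-- Stirling number of the second kind. -/
noncomputable def Stirling (n k : ℕ) : ℕ :=
  Set.ncard {P : Finpartition (Finset.univ : Finset (Fin n)) | P.parts.card = k}

noncomputable def Bell (n : ℕ) : ℕ :=
  Set.ncard (Set.univ : Set (Finpartition (Finset.univ : Finset (Fin n))))

noncomputable def SStar (n k : ℕ) : ℕ :=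
  Set.ncard {P : Finpartition (Finset.univ : Finset (Fin n)) |
    P.parts.card = k ∧ ∀ p ∈ P.parts, 2 ≤ p.card}

noncomputable def BellStar (n : ℕ) : ℕ :=
  Set.ncard {P : Finpartition (Finset.univ : Finset (Fin n)) |
    ∀ p ∈ P.parts, 2 ≤ p.card}

/-- The generating polynomial `S_n(x) = Σ_k S*(n,k) x^k`. -/
noncomputable def SPoly (n : ℕ) : Polynomial ℝ :=
  ∑ k ∈ Finset.range (n + 1), Polynomial.C (SStar n k : ℝ) * Polynomial.X ^ k


def sstar : ℕ → ℕ → ℕ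
  | 0, 0 => 1
  | 0, _+1 => 0
  | 1, _ => 0
  | _+2, 0 => 0
  | n+2, k+1 => (n+1) * sstar n k + (k+1) * sstar (n+1) (k+1)

def IsFam {α : Type*} [DecidableEq α] (s : Finset α) (k : ℕ) (A : Finset (Finset α)) : Prop :=
  A.card = k ∧ (∀ B ∈ A, 2 ≤ B.card) ∧ A.sup id = s ∧
    (A : Set (Finset α)).PairwiseDisjoint id

open scoped Classical in
noncomputable def famSet {α : Type*} [DecidableEq α] (s : Finset α) (k : ℕ) :
    Finset (Finset (Finset α)) :=
  s.powerset.powerset.filter (fun A => IsFam s k A)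

lemma block_subset {α : Type*} [DecidableEq α] {s : Finset α} {k : ℕ}
    {A : Finset (Finset α)} (h : IsFam s k A) : ∀ B ∈ A, B ⊆ s := by
  intro B hB
  have : id B ≤ A.sup id := Finset.le_sup hB
  rw [h.2.2.1] at this
  exact this

lemma mem_famSet {α : Type*} [DecidableEq α] {s : Finset α} {k : ℕ}
    {A : Finset (Finset α)} : A ∈ famSet s k ↔ IsFam s k A := by
  classical
  rw [famSet, Finset.mem_filter]
  constructor
  · exact fun h => h.2
  · intro h
    refine ⟨?_, h⟩
    rw [Finset.mem_powerset]
    intro B hB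
    rw [Finset.mem_powerset]
    exact block_subset h B hB

lemma sup_map_eq {α β : Type*} [DecidableEq α] [DecidableEq β] (f : α ↪ β)
    (A : Finset (Finset α)) (g : Finset α ↪ Finset β)
    (hg : ∀ B, g B = B.map f) :
    (A.map g).sup id = (A.sup id).map f := by
  induction A using Finset.cons_induction with
  | empty => simp
  | cons a A ha ih =>
      rw [Finset.map_cons, Finset.sup_cons, Finset.sup_cons, ih, hg,
        Finset.sup_eq_union, Finset.sup_eq_union]
      simp only [id_eq]
      rw [← Finset.map_union]

lemma famSet_map {α β : Type*} [DecidableEq α] [DecidableEq β] (f : α ↪ β)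
    (s : Finset α) (k : ℕ) :
    famSet (s.map f) k = (famSet s k).image (fun A => A.image (fun B => B.map f)) := by
  classical
  set g : Finset α ↪ Finset β := ⟨fun B => B.map f, Finset.map_injective f⟩ with hgdef
  have hg : ∀ B : Finset α, g B = B.map f := fun B => rfl
  have himg : ∀ A : Finset (Finset α), A.image (fun B => B.map f) = A.map g := by
    intro A
    rw [Finset.map_eq_image]
    rfl
  have key : ∀ A : Finset (Finset α), (IsFam (s.map f) k (A.map g) ↔ IsFam s k A) := by
    intro A
    constructor
    · rintro ⟨hcard, hsizes, hsup, hdisj⟩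
      refine ⟨by rwa [Finset.card_map] at hcard, ?_, ?_, ?_⟩
      · intro B hB
        have := hsizes (g B) (Finset.mem_map_of_mem g hB)
        rwa [hg, Finset.card_map] at this
      · rw [sup_map_eq f A g hg] at hsup
        exact Finset.map_injective f hsup
      · intro B1 h1 B2 h2 hne
        have := hdisj (Finset.mem_coe.2 (Finset.mem_map_of_mem g h1))
          (Finset.mem_coe.2 (Finset.mem_map_of_mem g h2))
          (fun hc => hne (g.injective hc))
        try simp only [id] at this ⊢
        rw [hg, hg] at this
        exact (Finset.disjoint_map f).1 this
    · rintro ⟨hcard, hsizes, hsup, hdisj⟩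
      refine ⟨by rw [Finset.card_map]; exact hcard, ?_, ?_, ?_⟩
      · intro B hB
        obtain ⟨B0, hB0, rfl⟩ := Finset.mem_map.1 hB
        rw [hg, Finset.card_map]
        exact hsizes B0 hB0
      · rw [sup_map_eq f A g hg, hsup]
      · intro B1 h1 B2 h2 hne
        obtain ⟨C1, hC1, rfl⟩ := Finset.mem_map.1 (Finset.mem_coe.1 h1)
        obtain ⟨C2, hC2, rfl⟩ := Finset.mem_map.1 (Finset.mem_coe.1 h2)
        have hCne : C1 ≠ C2 := fun hc => hne (by rw [hc])
        have := hdisj (Finset.mem_coe.2 hC1) (Finset.mem_coe.2 hC2) hCne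
        try simp only [id] at this ⊢
        rw [hg, hg]
        exact (Finset.disjoint_map f).2 this
  ext A'
  rw [mem_famSet]
  constructor
  · intro hA'
    have hblocks : A' ⊆ s.powerset.map g := by
      intro B' hB'
      have hsub : B' ⊆ s.map f := by
        have := block_subset hA' B' hB'
        exact this
      obtain ⟨u, hu, rfl⟩ := Finset.subset_map_iff.1 hsub
      exact Finset.mem_map_of_mem g (Finset.mem_powerset.2 hu)
    obtain ⟨A, _, rfl⟩ := Finset.subset_map_iff.1 hblocks
    refine Finset.mem_image.2 ⟨A, ?_, ?_⟩
    · rw [mem_famSet]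
      exact (key A).1 hA'
    · rw [himg]
  · intro hA'
    obtain ⟨A, hA, rfl⟩ := Finset.mem_image.1 hA'
    rw [himg]
    exact (key A).2 (mem_famSet.1 hA)

noncomputable def famCount (α : Type*) [Fintype α] [DecidableEq α] (k : ℕ) : ℕ :=
  (famSet (Finset.univ : Finset α) k).card

lemma famSet_card_map {α β : Type*} [DecidableEq α] [DecidableEq β] (f : α ↪ β)
    (s : Finset α) (k : ℕ) : (famSet (s.map f) k).card = (famSet s k).card := by
  classical
  rw [famSet_map f s k]
  set g : Finset α ↪ Finset β := ⟨fun B => B.map f, Finset.map_injective f⟩ with hgdef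
  have himg : ∀ A : Finset (Finset α), A.image (fun B => B.map f) = A.map g := by
    intro A
    rw [Finset.map_eq_image]
    rfl
  rw [show (fun A : Finset (Finset α) => A.image (fun B => B.map f)) = fun A => A.map g
    from funext himg]
  exact Finset.card_image_of_injective _ (Finset.map_injective g)

lemma famSet_card_subtype {α : Type*} [DecidableEq α] (s : Finset α) (k : ℕ) :
    (famSet s k).card = famCount {x // x ∈ s} k := by
  classical
  have h1 : s.attach.map (Function.Embedding.subtype fun x => x ∈ s) = s :=
    Finset.attach_map_val
  have h2 : (Finset.univ : Finset {x // x ∈ s}) = s.attach := Finset.univ_eq_attach s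
  rw [famCount, h2, ← famSet_card_map (Function.Embedding.subtype fun x => x ∈ s) s.attach k,
    h1]

lemma famCount_congr {α β : Type*} [Fintype α] [DecidableEq α] [Fintype β] [DecidableEq β]
    (e : α ≃ β) (k : ℕ) : famCount α k = famCount β k := by
  rw [famCount, famCount, ← famSet_card_map e.toEmbedding Finset.univ k,
    Finset.map_univ_equiv]

lemma famCount_eq_of_card {α : Type*} [DecidableEq α] (s : Finset α) (m k : ℕ)
    (h : s.card = m) : (famSet s k).card = famCount (Fin m) k := by
  rw [famSet_card_subtype]
  exact famCount_congr (Fintype.equivFinOfCardEq (by rw [Fintype.card_coe]; exact h)) k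

lemma famCount_zero (n : ℕ) : famCount (Fin (n+1)) 0 = 0 := by
  classical
  rw [famCount, Finset.card_eq_zero, Finset.eq_empty_iff_forall_notMem]
  intro A hA
  obtain ⟨hcard, _, hsup, _⟩ := mem_famSet.1 hA
  rw [Finset.card_eq_zero.1 hcard] at hsup
  simp only [Finset.sup_empty] at hsup
  have : (0 : Fin (n+1)) ∈ (Finset.univ : Finset (Fin (n+1))) := Finset.mem_univ _
  rw [← hsup] at this
  simp at this

lemma famCount_fin0 : famCount (Fin 0) 0 = 1 := by
  classical
  rw [famCount]
  have : famSet (Finset.univ : Finset (Fin 0)) 0 = {∅} := by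
    ext A
    rw [mem_famSet, Finset.mem_singleton]
    constructor
    · intro h
      exact Finset.card_eq_zero.1 h.1
    · rintro rfl
      refine ⟨rfl, by simp, ?_, by simp⟩
      simp [Finset.univ_eq_empty]
  rw [this, Finset.card_singleton]

lemma famCount_small (m k : ℕ) (hm : m ≤ 1) : famCount (Fin m) (k+1) = 0 := by
  classical
  rw [famCount, Finset.card_eq_zero, Finset.eq_empty_iff_forall_notMem]
  intro A hA
  obtain ⟨hcard, hsizes, hsup, _⟩ := mem_famSet.1 hA
  have hne : A.Nonempty := Finset.card_pos.1 (by omega)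
  obtain ⟨B, hB⟩ := hne
  have h2 : 2 ≤ B.card := hsizes B hB
  have hsub : B ⊆ Finset.univ := block_subset (mem_famSet.1 hA) B hB
  have := Finset.card_le_card hsub
  rw [Finset.card_univ, Fintype.card_fin] at this
  omega

lemma sup_erase_fam {α : Type*} [DecidableEq α] {s : Finset α} {k : ℕ}
    {A : Finset (Finset α)} (h : IsFam s k A) {B : Finset α} (hB : B ∈ A) :
    (A.erase B).sup id = s \ B := by
  ext x
  rw [Finset.mem_sup, Finset.mem_sdiff]
  constructor
  · rintro ⟨C, hC, hxC⟩
    obtain ⟨hCne, hCA⟩ := Finset.mem_erase.1 hC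
    refine ⟨block_subset h C hCA hxC, ?_⟩
    intro hxB
    exact (Finset.disjoint_left.1
      (h.2.2.2 (Finset.mem_coe.2 hCA) (Finset.mem_coe.2 hB) hCne)) hxC hxB
  · rintro ⟨hxs, hxB⟩
    have hx : x ∈ A.sup id := by rw [h.2.2.1]; exact hxs
    obtain ⟨C, hC, hxC⟩ := Finset.mem_sup.1 hx
    refine ⟨C, Finset.mem_erase.2 ⟨?_, hC⟩, hxC⟩
    rintro rfl
    exact hxB hxC

set_option maxHeartbeats 1000000 in
lemma famCount_rec (n k : ℕ) :
    famCount (Fin (n+2)) (k+1)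
      = (n+1) * famCount (Fin n) k + (k+1) * famCount (Fin (n+1)) (k+1) := by
  classical
  set e : Fin (n+2) := Fin.last (n+1) with he
  set T := famSet (Finset.univ : Finset (Fin (n+2))) (k+1) with hT
  set p2 : Finset (Finset (Fin (n+2))) → Prop :=
    fun A => ∃ B ∈ A, e ∈ B ∧ B.card = 2 with hp2
  have hsplit := Finset.card_filter_add_card_filter_not (s := T) p2
  -- families where the block of e has size 2
  have hcard2 : (T.filter p2).card = (n+1) * famCount (Fin n) k := by
    have hbij : ((Finset.univ.erase e).sigma
        (fun j => famSet ((Finset.univ : Finset (Fin (n+2))) \ {e, j}) k)).card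
        = (T.filter p2).card := by
      apply Finset.card_bij
        (fun x _ => insert ({e, x.1} : Finset (Fin (n+2))) x.2)
      · -- maps into
        rintro ⟨j, A'⟩ hx
        rw [Finset.mem_sigma] at hx
        obtain ⟨hj, hA'⟩ := hx
        have hjne : j ≠ e := (Finset.mem_erase.1 hj).1
        have hfam := mem_famSet.1 hA'
        have hblock : ∀ B ∈ A', B ⊆ Finset.univ \ {e, j} := block_subset hfam
        have hnot : ({e, j} : Finset (Fin (n+2))) ∉ A' := by
          intro hmem
          have := hblock _ hmem (Finset.mem_insert_self e {j})
          rw [Finset.mem_sdiff] at this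
          exact this.2 (Finset.mem_insert_self e {j})
        rw [Finset.mem_filter]
        constructor
        · rw [hT, mem_famSet]
          refine ⟨?_, ?_, ?_, ?_⟩
          · rw [Finset.card_insert_of_notMem hnot, hfam.1]
          · intro B hB
            rcases Finset.mem_insert.1 hB with rfl | hB'
            · rw [Finset.card_pair (Ne.symm hjne)]
            · exact hfam.2.1 B hB'
          · rw [Finset.sup_insert, hfam.2.2.1]
            simp only [id_eq]
            rw [Finset.sup_eq_union]
            exact Finset.union_sdiff_of_subset (Finset.subset_univ _)
          · rw [Finset.coe_insert]
            refine hfam.2.2.2.insert ?_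
            intro C hC _
            simp only [id_eq]
            rw [Finset.disjoint_left]
            intro a ha haC
            have := hblock C (Finset.mem_coe.1 hC) haC
            rw [Finset.mem_sdiff] at this
            exact this.2 ha
        · exact ⟨{e, j}, Finset.mem_insert_self _ _, Finset.mem_insert_self e {j},
            Finset.card_pair (Ne.symm hjne)⟩
      · -- injective
        rintro ⟨j₁, A₁⟩ hx₁ ⟨j₂, A₂⟩ hx₂ heq
        rw [Finset.mem_sigma] at hx₁ hx₂
        obtain ⟨hj₁, hA₁⟩ := hx₁
        obtain ⟨hj₂, hA₂⟩ := hx₂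
        have hj₁ne : j₁ ≠ e := (Finset.mem_erase.1 hj₁).1
        have hj₂ne : j₂ ≠ e := (Finset.mem_erase.1 hj₂).1
        have hblock₂ : ∀ B ∈ A₂, B ⊆ Finset.univ \ {e, j₂} :=
          block_subset (mem_famSet.1 hA₂)
        have hblock₁ : ∀ B ∈ A₁, B ⊆ Finset.univ \ {e, j₁} :=
          block_subset (mem_famSet.1 hA₁)
        have hmem : ({e, j₁} : Finset (Fin (n+2))) ∈ insert ({e, j₂} : Finset (Fin (n+2))) A₂ := by
          rw [← heq]; exact Finset.mem_insert_self _ _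
        have hjj : j₁ = j₂ := by
          rcases Finset.mem_insert.1 hmem with hh | hh
          · have : j₁ ∈ ({e, j₂} : Finset (Fin (n+2))) := by
              rw [← hh]; exact Finset.mem_insert_of_mem (Finset.mem_singleton_self j₁)
            rcases Finset.mem_insert.1 this with h' | h'
            · exact absurd h' hj₁ne
            · exact Finset.mem_singleton.1 h'
          · have := hblock₂ _ hh (Finset.mem_insert_self e {j₁})
            rw [Finset.mem_sdiff] at this
            exact absurd (Finset.mem_insert_self e {j₂}) this.2
        subst hjj
        have hnot₁ : ({e, j₁} : Finset (Fin (n+2))) ∉ A₁ := by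
          intro hmem'
          have := hblock₁ _ hmem' (Finset.mem_insert_self e {j₁})
          rw [Finset.mem_sdiff] at this
          exact this.2 (Finset.mem_insert_self e {j₁})
        have hnot₂ : ({e, j₁} : Finset (Fin (n+2))) ∉ A₂ := by
          intro hmem'
          have := hblock₂ _ hmem' (Finset.mem_insert_self e {j₁})
          rw [Finset.mem_sdiff] at this
          exact this.2 (Finset.mem_insert_self e {j₁})
        have : A₁ = A₂ := by
          rw [← Finset.erase_insert hnot₁, ← Finset.erase_insert hnot₂, heq]
        rw [this]
      · -- surjective
        intro A hA
        rw [Finset.mem_filter] at hA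
        obtain ⟨hAT, B, hBA, heB, hB2⟩ := hA
        have hfam := mem_famSet.1 (hT ▸ hAT)
        obtain ⟨x, y, hxy, hBxy⟩ := Finset.card_eq_two.1 hB2
        have hj : ∃ j, j ≠ e ∧ B = {e, j} := by
          rw [hBxy] at heB
          rcases Finset.mem_insert.1 heB with rfl | hy
          · exact ⟨y, fun hc => hxy hc.symm, by rw [hBxy]⟩
          · have : e = y := Finset.mem_singleton.1 hy
            subst this
            refine ⟨x, fun hc => hxy hc, by rw [hBxy, Finset.pair_comm]⟩
        obtain ⟨j, hjne, hBej⟩ := hj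
        refine ⟨⟨j, A.erase B⟩, ?_, ?_⟩
        · rw [Finset.mem_sigma]
          constructor
          · exact Finset.mem_erase.2 ⟨hjne, Finset.mem_univ j⟩
          · rw [mem_famSet]
            refine ⟨?_, ?_, ?_, ?_⟩
            · rw [Finset.card_erase_of_mem hBA, hfam.1]
              omega
            · intro C hC
              exact hfam.2.1 C (Finset.mem_of_mem_erase hC)
            · rw [sup_erase_fam hfam hBA, hBej]
            · exact hfam.2.2.2.subset (by
                intro C hC
                exact Finset.mem_coe.2 (Finset.mem_of_mem_erase (Finset.mem_coe.1 hC)))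
        · rw [← hBej, Finset.insert_erase hBA]
    rw [← hbij, Finset.card_sigma]
    have hconst : ∀ j ∈ Finset.univ.erase e,
        (famSet ((Finset.univ : Finset (Fin (n+2))) \ {e, j}) k).card
          = famCount (Fin n) k := by
      intro j hj
      apply famCount_eq_of_card
      rw [Finset.card_sdiff_of_subset (Finset.subset_univ _), Finset.card_univ, Fintype.card_fin,
        Finset.card_pair (Ne.symm (Finset.mem_erase.1 hj).1)]
      omega
    rw [Finset.sum_congr rfl hconst, Finset.sum_const, Finset.card_erase_of_mem
      (Finset.mem_univ e), Finset.card_univ, Fintype.card_fin, smul_eq_mul]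
    norm_num
  have hcard3 : (T.filter (fun A => ¬ p2 A)).card = (k+1) * famCount (Fin (n+1)) (k+1) := by
    have hbij : ((famSet (Finset.univ.erase e) (k+1)).sigma (fun A' => A')).card
        = (T.filter (fun A => ¬ p2 A)).card := by
      apply Finset.card_bij (fun x _ => insert (insert e x.2) (x.1.erase x.2))
      · rintro ⟨A', b⟩ hx
        dsimp only
        simp only [Finset.mem_sigma] at hx
        obtain ⟨hA', hb⟩ := hx
        have hfam := mem_famSet.1 hA'
        have hblock : ∀ B ∈ A', B ⊆ Finset.univ.erase e := block_subset hfam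
        have hbavoid : ∀ B ∈ A', e ∉ B :=
          fun B hB hc => (Finset.mem_erase.1 (hblock B hB hc)).1 rfl
        have heb : e ∉ b := hbavoid b hb
        have hnot : insert e b ∉ A'.erase b := by
          intro hc
          exact hbavoid _ (Finset.mem_of_mem_erase hc) (Finset.mem_insert_self e b)
        have hb2 : 2 ≤ b.card := hfam.2.1 b hb
        rw [Finset.mem_filter]
        refine ⟨?_, ?_⟩
        · rw [hT, mem_famSet]
          refine ⟨?_, ?_, ?_, ?_⟩
          · rw [Finset.card_insert_of_notMem hnot, Finset.card_erase_of_mem hb, hfam.1]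
            omega
          · intro B hB
            rcases Finset.mem_insert.1 hB with rfl | hB'
            · rw [Finset.card_insert_of_notMem heb]; omega
            · exact hfam.2.1 B (Finset.mem_of_mem_erase hB')
          · rw [Finset.sup_insert]
            simp only [id_eq]
            rw [Finset.sup_eq_union, sup_erase_fam hfam hb]
            ext x
            simp only [Finset.mem_union, Finset.mem_insert, Finset.mem_sdiff,
              Finset.mem_erase, Finset.mem_univ, and_true, true_and, iff_true]
            tauto
          · rw [Finset.coe_insert]
            refine (hfam.2.2.2.subset (by
              intro C hC
              exact Finset.mem_coe.2 (Finset.mem_of_mem_erase (Finset.mem_coe.1 hC)))).insert ?_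
            intro C hC hne
            have hCA : C ∈ A'.erase b := Finset.mem_coe.1 hC
            simp only [id_eq]
            rw [Finset.disjoint_left]
            intro a ha haC
            rcases Finset.mem_insert.1 ha with rfl | hab
            · exact hbavoid C (Finset.mem_of_mem_erase hCA) haC
            · exact (Finset.disjoint_left.1 (hfam.2.2.2 (Finset.mem_coe.2 hb)
                (Finset.mem_coe.2 (Finset.mem_of_mem_erase hCA))
                (Ne.symm (Finset.mem_erase.1 hCA).1))) hab haC
        · rintro ⟨B, hBmem, heB, hBcard⟩
          rcases Finset.mem_insert.1 hBmem with rfl | hB'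
          · rw [Finset.card_insert_of_notMem heb] at hBcard; omega
          · exact hbavoid B (Finset.mem_of_mem_erase hB') heB
      · rintro ⟨A₁, b₁⟩ hx₁ ⟨A₂, b₂⟩ hx₂ heq
        dsimp only at heq
        simp only [Finset.mem_sigma] at hx₁ hx₂
        obtain ⟨hA₁, hb₁⟩ := hx₁
        obtain ⟨hA₂, hb₂⟩ := hx₂
        have hfam₁ := mem_famSet.1 hA₁
        have hfam₂ := mem_famSet.1 hA₂
        have havoid₁ : ∀ B ∈ A₁, e ∉ B :=
          fun B hB hc => (Finset.mem_erase.1 (block_subset hfam₁ B hB hc)).1 rfl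
        have havoid₂ : ∀ B ∈ A₂, e ∉ B :=
          fun B hB hc => (Finset.mem_erase.1 (block_subset hfam₂ B hB hc)).1 rfl
        have heb₁ : e ∉ b₁ := havoid₁ b₁ hb₁
        have heb₂ : e ∉ b₂ := havoid₂ b₂ hb₂
        have hmem : insert e b₁ ∈ insert (insert e b₂) (A₂.erase b₂) := by
          rw [← heq]; exact Finset.mem_insert_self _ _
        have hbb : b₁ = b₂ := by
          rcases Finset.mem_insert.1 hmem with hh | hh
          · have := congrArg (fun s => Finset.erase s e) hh
            simpa [Finset.erase_insert heb₁, Finset.erase_insert heb₂] using this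
          · exact absurd (Finset.mem_insert_self e b₁)
              (fun hc => havoid₂ _ (Finset.mem_of_mem_erase hh) hc)
        subst hbb
        have hnot₁ : insert e b₁ ∉ A₁.erase b₁ := by
          intro hc
          exact havoid₁ _ (Finset.mem_of_mem_erase hc) (Finset.mem_insert_self e b₁)
        have hnot₂ : insert e b₁ ∉ A₂.erase b₁ := by
          intro hc
          exact havoid₂ _ (Finset.mem_of_mem_erase hc) (Finset.mem_insert_self e b₁)
        have hAA : A₁.erase b₁ = A₂.erase b₁ := by
          rw [← Finset.erase_insert hnot₁, ← Finset.erase_insert hnot₂, heq]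
        have : A₁ = A₂ := by
          rw [← Finset.insert_erase hb₁, ← Finset.insert_erase hb₂, hAA]
        rw [this]
      · intro A hA
        rw [Finset.mem_filter] at hA
        obtain ⟨hAT, hnp2⟩ := hA
        have hfam := mem_famSet.1 (hT ▸ hAT)
        have heu : e ∈ A.sup id := by rw [hfam.2.2.1]; exact Finset.mem_univ e
        obtain ⟨B, hBA, heB⟩ := Finset.mem_sup.1 heu
        simp only [id_eq] at heB
        have hB2 : 2 ≤ B.card := hfam.2.1 B hBA
        have hB3 : 3 ≤ B.card := by
          rcases Nat.lt_or_ge B.card 3 with h | h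
          · exact absurd ⟨B, hBA, heB, by omega⟩ hnp2
          · exact h
        have hbcard : (B.erase e).card = B.card - 1 := Finset.card_erase_of_mem heB
        have hbB : B.erase e ⊆ B := Finset.erase_subset e B
        have hbne : B.erase e ≠ B := by
          intro hc
          have : e ∈ B.erase e := by rw [hc]; exact heB
          exact (Finset.mem_erase.1 this).1 rfl
        have hbnotinA : B.erase e ∉ A := by
          intro hbA
          have hdisj := hfam.2.2.2 (Finset.mem_coe.2 hbA) (Finset.mem_coe.2 hBA) hbne
          have hbne' : (B.erase e).Nonempty := Finset.card_pos.1 (by omega)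
          obtain ⟨x, hx⟩ := hbne'
          exact (Finset.disjoint_left.1 hdisj) hx (hbB hx)
        have hbnotinerase : B.erase e ∉ A.erase B :=
          fun hc => hbnotinA (Finset.mem_of_mem_erase hc)
        have havoid : ∀ C ∈ A, C ≠ B → e ∉ C := by
          intro C hC hne hc
          exact (Finset.disjoint_left.1
            (hfam.2.2.2 (Finset.mem_coe.2 hC) (Finset.mem_coe.2 hBA) hne)) hc heB
        refine ⟨⟨insert (B.erase e) (A.erase B), B.erase e⟩, ?_, ?_⟩
        · rw [Finset.mem_sigma]
          dsimp only
          refine ⟨?_, Finset.mem_insert_self (B.erase e) _⟩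
          rw [mem_famSet]
          refine ⟨?_, ?_, ?_, ?_⟩
          · rw [Finset.card_insert_of_notMem hbnotinerase,
              Finset.card_erase_of_mem hBA, hfam.1]
            omega
          · intro C hC
            rcases Finset.mem_insert.1 hC with rfl | hC'
            · omega
            · exact hfam.2.1 C (Finset.mem_of_mem_erase hC')
          · rw [Finset.sup_insert]
            simp only [id_eq]
            rw [Finset.sup_eq_union, sup_erase_fam hfam hBA]
            ext x
            simp only [Finset.mem_union, Finset.mem_sdiff, Finset.mem_univ, true_and,
              Finset.mem_erase, and_true]
            constructor
            · rintro (hx | hx)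
              · exact hx.1
              · intro hc
                rw [hc] at hx
                exact hx heB
            · intro hxe
              by_cases hxB : x ∈ B
              · exact Or.inl ⟨hxe, hxB⟩
              · exact Or.inr hxB
          · rw [Finset.coe_insert]
            refine (hfam.2.2.2.subset (by
              intro C hC
              exact Finset.mem_coe.2 (Finset.mem_of_mem_erase (Finset.mem_coe.1 hC)))).insert ?_
            intro C hC hne
            have hCA : C ∈ A.erase B := Finset.mem_coe.1 hC
            simp only [id_eq]
            exact Disjoint.mono_left hbB (hfam.2.2.2 (Finset.mem_coe.2 hBA)
              (Finset.mem_coe.2 (Finset.mem_of_mem_erase hCA))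
              (Ne.symm (Finset.mem_erase.1 hCA).1))
        · show insert (insert e (B.erase e))
              ((insert (B.erase e) (A.erase B)).erase (B.erase e)) = A
          rw [Finset.erase_insert hbnotinerase, Finset.insert_erase heB,
            Finset.insert_erase hBA]
    rw [← hbij, Finset.card_sigma]
    have hconst : ∀ A' ∈ famSet (Finset.univ.erase e) (k+1), A'.card = k+1 :=
      fun A' hA' => (mem_famSet.1 hA').1
    rw [Finset.sum_congr rfl hconst, Finset.sum_const, smul_eq_mul]
    have hcnt : (famSet (Finset.univ.erase e) (k+1)).card = famCount (Fin (n+1)) (k+1) := by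
      apply famCount_eq_of_card
      rw [Finset.card_erase_of_mem (Finset.mem_univ e), Finset.card_univ, Fintype.card_fin]
      omega
    rw [hcnt, mul_comm]
  have hTcard : famCount (Fin (n+2)) (k+1) = T.card := by rw [hT]; rfl
  rw [hTcard, ← hsplit, hcard2, hcard3]

lemma famCount_eq_sstar : ∀ n k, famCount (Fin n) k = sstar n k
  | 0, 0 => famCount_fin0
  | 0, k+1 => famCount_small 0 k (by omega)
  | 1, 0 => famCount_zero 0
  | 1, k+1 => famCount_small 1 k (by omega)
  | n+2, 0 => famCount_zero (n+1)
  | n+2, k+1 => by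
      rw [famCount_rec, famCount_eq_sstar n k, famCount_eq_sstar (n+1) (k+1)]
      rfl

lemma SStar_eq_famCount (n k : ℕ) : SStar n k = famCount (Fin n) k := by
  classical
  rw [SStar, famCount]
  rw [← Nat.card_coe_set_eq, ← Nat.card_eq_finsetCard]
  apply Nat.card_congr
  refine ⟨fun P => ⟨P.1.parts, ?_⟩, fun A => ⟨⟨A.1,
    Finset.supIndep_iff_pairwiseDisjoint.2 (mem_famSet.1 A.2).2.2.2,
    (mem_famSet.1 A.2).2.2.1, ?_⟩, ?_⟩, ?_, ?_⟩
  · obtain ⟨P, hP⟩ := P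
    exact mem_famSet.2 ⟨hP.1, hP.2, P.sup_parts,
      Finset.supIndep_iff_pairwiseDisjoint.1 P.supIndep⟩
  · intro hbot
    have := (mem_famSet.1 A.2).2.1 ⊥ hbot
    simp at this
  · exact ⟨(mem_famSet.1 A.2).1, (mem_famSet.1 A.2).2.1⟩
  · intro P
    apply Subtype.ext
    apply Finpartition.ext
    rfl
  · intro A
    apply Subtype.ext
    rfl

lemma SStar_eq_sstar (n k : ℕ) : SStar n k = sstar n k := by
  rw [SStar_eq_famCount]
  exact famCount_eq_sstar n k

lemma sstar_eq_zero : ∀ n k, n < 2 * k → sstar n k = 0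
  | 0, 0 => by omega
  | 0, k+1 => fun _ => rfl
  | 1, k => fun _ => rfl
  | n+2, 0 => fun _ => rfl
  | n+2, k+1 => fun h => by
      have h1 : sstar n k = 0 := sstar_eq_zero n k (by omega)
      have h2 : sstar (n+1) (k+1) = 0 := sstar_eq_zero (n+1) (k+1) (by omega)
      show (n+1) * sstar n k + (k+1) * sstar (n+1) (k+1) = 0
      rw [h1, h2]; ring

lemma sstar_half_pos : ∀ n, n ≠ 1 → 0 < sstar n (n / 2)
  | 0, _ => Nat.one_pos
  | 1, h => absurd rfl h
  | n+2, _ => by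
      have hh : (n+2)/2 = n/2 + 1 := by omega
      rw [hh]
      show 0 < (n+1) * sstar n (n/2) + (n/2+1) * sstar (n+1) (n/2+1)
      rcases eq_or_ne n 1 with rfl | hne
      · show 0 < 2 * sstar 1 0 + 1 * sstar 2 1
        show 0 < 2 * 0 + 1 * (1 * sstar 0 0 + 1 * sstar 1 1)
        simp [sstar]
      · have := sstar_half_pos n hne
        positivity

lemma sstar_one_pos : ∀ n, 2 ≤ n → 0 < sstar n 1
  | 0, h => by omega
  | 1, h => by omega
  | 2, _ => by simp [sstar]
  | n+3, _ => by
      have := sstar_one_pos (n+2) (by omega)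
      show 0 < (n+2) * sstar (n+1) 0 + 1 * sstar (n+2) 1
      omega

noncomputable def sP (n : ℕ) : Polynomial ℝ :=
  ∑ k ∈ Finset.range (n + 1), Polynomial.C (sstar n k : ℝ) * Polynomial.X ^ k

lemma sP_coeff (n m : ℕ) : (sP n).coeff m = (sstar n m : ℝ) := by
  rw [sP, finset_sum_coeff]
  simp only [coeff_C_mul, coeff_X_pow]
  rw [Finset.sum_eq_single m]
  · simp
  · intro k _ hk; simp [hk.symm]
  · intro hm
    rw [Finset.mem_range, not_lt] at hm
    have : sstar n m = 0 := sstar_eq_zero n m (by omega)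
    simp [this]

lemma sP_natDegree (n : ℕ) (hn : n ≠ 1) : (sP n).natDegree = n / 2 := by
  refine le_antisymm ?_ ?_
  · rw [Polynomial.natDegree_le_iff_coeff_eq_zero]
    intro N hN
    rw [sP_coeff]
    have : sstar n N = 0 := sstar_eq_zero n N (by omega)
    simp [this]
  · apply Polynomial.le_natDegree_of_ne_zero
    rw [sP_coeff]
    have := sstar_half_pos n hn
    positivity

lemma sP_leadingCoeff (n : ℕ) (hn : n ≠ 1) : (sP n).leadingCoeff = (sstar n (n/2) : ℝ) := by
  rw [Polynomial.leadingCoeff, sP_natDegree n hn, sP_coeff]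

lemma sP_leadingCoeff_pos (n : ℕ) (hn : n ≠ 1) : 0 < (sP n).leadingCoeff := by
  rw [sP_leadingCoeff n hn]
  have := sstar_half_pos n hn
  positivity

lemma sP_ne_zero (n : ℕ) (hn : n ≠ 1) : sP n ≠ 0 :=
  fun h => by simpa [h] using sP_leadingCoeff_pos n hn

lemma sP_rec (n : ℕ) :
    sP (n+2) = C ((n : ℝ) + 1) * X * sP n + X * derivative (sP (n+1)) := by
  ext m
  rw [sP_coeff, coeff_add]
  have h1 : C ((n : ℝ) + 1) * X * sP n = (C ((n : ℝ) + 1) * sP n) * X := by ring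
  have h2 : X * derivative (sP (n+1)) = derivative (sP (n+1)) * X := by ring
  rw [h1, h2]
  cases m with
  | zero =>
      rw [Polynomial.coeff_mul_X_zero, Polynomial.coeff_mul_X_zero]
      show ((sstar (n+2) 0 : ℕ) : ℝ) = 0 + 0
      simp [sstar]
  | succ k =>
      rw [Polynomial.coeff_mul_X, Polynomial.coeff_mul_X, coeff_C_mul, sP_coeff,
        Polynomial.coeff_derivative, sP_coeff]
      show ((((n:ℕ)+1) * sstar n k + (k+1) * sstar (n+1) (k+1) : ℕ) : ℝ) = _
      push_cast
      ring


open Finset Polynomial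

structure RD (p : Polynomial ℝ) (d : ℕ) (ρ : ℕ → ℝ) : Prop where
  dpos : 0 < d
  deg : p.natDegree = d
  lead : 0 < p.leadingCoeff
  zero : ρ 0 = 0
  anti : ∀ ⦃i j : ℕ⦄, i < j → j < d → ρ j < ρ i
  fact : p = C p.leadingCoeff * ∏ j ∈ Finset.range d, (X - C (ρ j))

namespace RD

variable {p : Polynomial ℝ} {d : ℕ} {ρ : ℕ → ℝ}

lemma mono (h : RD p d ρ) : ∀ ⦃i j : ℕ⦄, i ≤ j → j < d → ρ j ≤ ρ i := by
  intro i j hij hjd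
  rcases eq_or_lt_of_le hij with rfl | hlt
  · exact le_refl _
  · exact (h.anti hlt hjd).le

lemma neg (h : RD p d ρ) : ∀ ⦃j : ℕ⦄, 1 ≤ j → j < d → ρ j < 0 := by
  intro j h1 hjd
  have := h.anti (show 0 < j by omega) hjd
  rwa [h.zero] at this

lemma nonpos (h : RD p d ρ) : ∀ ⦃j : ℕ⦄, j < d → ρ j ≤ 0 := by
  intro j hjd
  rcases Nat.eq_zero_or_pos j with rfl | h1
  · exact le_of_eq h.zero
  · exact (h.neg h1 hjd).le

lemma evalEq (h : RD p d ρ) (x : ℝ) : p.eval x = p.leadingCoeff * ∏ j ∈ Finset.range d, (x - ρ j) := by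
  conv_lhs => rw [h.fact]
  simp [Polynomial.eval_prod]

lemma ne_zero (h : RD p d ρ) : p ≠ 0 := fun hp => by simpa [hp] using h.lead

end RD

lemma prod_sign {ι : Type*} [DecidableEq ι] (s : Finset ι) (f : ι → ℝ)
    (h0 : ∀ i ∈ s, f i ≠ 0) :
    0 < (-1 : ℝ)^((s.filter (fun i => f i < 0)).card) * ∏ i ∈ s, f i := by
  classical
  induction s using Finset.cons_induction with
  | empty => simp
  | cons a s ha ih =>
      have h0' : ∀ i ∈ s, f i ≠ 0 := fun i hi => h0 i (Finset.mem_cons_of_mem hi)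
      have hpos := ih h0'
      rw [Finset.filter_cons, Finset.prod_cons]
      rcases lt_or_gt_of_ne (h0 a (Finset.mem_cons_self a s)) with hfa | hfa
      · rw [if_pos hfa, Finset.card_cons, pow_succ]
        nlinarith
      · rw [if_neg (by push_neg; exact hfa.le)]
        nlinarith

lemma sign_mul_lemma {j : ℕ} {A B : ℝ} (h1 : 0 < (-1 : ℝ)^j * A)
    (h2 : 0 < (-1 : ℝ)^(j+1) * B) : A * B < 0 := by
  rcases Nat.even_or_odd j with he | ho
  · rw [he.neg_one_pow, one_mul] at h1
    rw [he.add_one.neg_one_pow] at h2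
    nlinarith
  · rw [ho.neg_one_pow] at h1
    rw [ho.add_one.neg_one_pow, one_mul] at h2
    nlinarith

lemma exists_root_Ioo (r : Polynomial ℝ) {a b : ℝ} (hab : a < b)
    (h : r.eval a * r.eval b < 0) : ∃ y, a < y ∧ y < b ∧ r.eval y = 0 := by
  have hc : ContinuousOn (fun x => r.eval x) (Set.Icc a b) := (r.continuous).continuousOn
  rcases mul_neg_iff.1 h with ⟨hpos, hneg⟩ | ⟨hneg, hpos⟩
  · obtain ⟨y, hy, hy0⟩ := intermediate_value_Ioo' hab.le hc
      (Set.mem_Ioo.2 ⟨hneg, hpos⟩ : (0:ℝ) ∈ Set.Ioo (r.eval b) (r.eval a))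
    exact ⟨y, hy.1, hy.2, hy0⟩
  · obtain ⟨y, hy, hy0⟩ := intermediate_value_Ioo hab.le hc
      (Set.mem_Ioo.2 ⟨hneg, hpos⟩ : (0:ℝ) ∈ Set.Ioo (r.eval a) (r.eval b))
    exact ⟨y, hy.1, hy.2, hy0⟩

lemma roots_le (r : Polynomial ℝ) (hr0 : r ≠ 0) (m : ℕ) (ρ : ℕ → ℝ)
    (hinj : ∀ i < m, ∀ j < m, ρ i = ρ j → i = j)
    (hroot : ∀ j < m, r.eval (ρ j) = 0) :
    ((Finset.range m).image ρ).val ≤ r.roots := by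
  classical
  set R : Finset ℝ := (Finset.range m).image ρ with hR
  rw [Multiset.le_iff_count]
  intro a
  by_cases ha : a ∈ R
  · rw [Multiset.count_eq_one_of_mem R.nodup ha, Polynomial.count_roots]
    obtain ⟨j, hj, rfl⟩ := Finset.mem_image.1 ha
    exact (Polynomial.rootMultiplicity_pos hr0).2 (hroot j (Finset.mem_range.1 hj))
  · rw [Multiset.count_eq_zero.2 ha]
    exact Nat.zero_le _

lemma card_image_roots (m : ℕ) (ρ : ℕ → ℝ)
    (hinj : ∀ i < m, ∀ j < m, ρ i = ρ j → i = j) :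
    ((Finset.range m).image ρ).card = m := by
  rw [Finset.card_image_of_injOn (fun i hi j hj hij =>
    hinj i (Finset.mem_range.1 hi) j (Finset.mem_range.1 hj) hij)]
  exact Finset.card_range m

lemma factor_of_roots (r : Polynomial ℝ) (hr0 : r ≠ 0) (d : ℕ) (hdeg : r.natDegree = d)
    (ρ : ℕ → ℝ) (hinj : ∀ i < d, ∀ j < d, ρ i = ρ j → i = j)
    (hroot : ∀ j < d, r.eval (ρ j) = 0) :
    r = C r.leadingCoeff * ∏ j ∈ Finset.range d, (X - C (ρ j)) := by
  classical
  set R : Finset ℝ := (Finset.range d).image ρ with hR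
  have hle := roots_le r hr0 d ρ hinj hroot
  have hcard : R.card = d := card_image_roots d ρ hinj
  have hcards : Multiset.card r.roots ≤ d := hdeg ▸ r.card_roots'
  have hRr : R.val = r.roots := Multiset.eq_of_le_of_card_le hle (by
    rw [Finset.card_def] at hcard
    omega)
  have hsplits : r.Splits := Polynomial.splits_iff_card_roots.2 (by
    rw [← hRr, hdeg]
    rw [Finset.card_def] at hcard
    exact hcard)
  have hfac := hsplits.eq_prod_roots
  rw [← hRr] at hfac
  have hprod : (Multiset.map (fun a => X - C a) R.val).prod
      = ∏ j ∈ Finset.range d, (X - C (ρ j)) := by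
    rw [← Finset.prod_eq_multiset_prod, Finset.prod_image (fun i hi j hj hij =>
      hinj i (Finset.mem_range.1 hi) j (Finset.mem_range.1 hj) hij)]
  rw [hprod] at hfac
  exact hfac

set_option maxHeartbeats 1000000 in
lemma step {p q r : Polynomial ℝ} {c : ℝ} (hc : 0 < c) {d₁ d₂ d₃ : ℕ}
    {ρ₁ ρ₂ : ℕ → ℝ} (h₁ : RD p d₁ ρ₁) (h₂ : RD q d₂ ρ₂)
    (hd12 : d₁ ≤ d₂) (hd21 : d₂ ≤ d₁ + 1)
    (hia : ∀ j, 1 ≤ j → j < d₁ → ρ₁ j < ρ₂ j)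
    (hib : ∀ j, j + 1 < d₂ → ρ₂ (j+1) < ρ₁ j)
    (hr : r = C c * X * p + X * derivative q)
    (hdeg : r.natDegree = d₃) (hd₃a : d₂ ≤ d₃) (hd₃b : d₃ ≤ d₂ + 1)
    (hlead : 0 < r.leadingCoeff) (hc1 : 0 < r.coeff 1) :
    ∃ ρ₃ : ℕ → ℝ, RD r d₃ ρ₃ ∧ (∀ j, 1 ≤ j → j < d₂ → ρ₂ j < ρ₃ j) ∧
      (∀ j, j + 1 < d₃ → ρ₃ (j+1) < ρ₂ j) := by
  classical
  have hrne : r ≠ 0 := fun h => by simp [h] at hlead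
  have hd₁pos : 0 < d₁ := h₁.dpos
  have hd₂pos : 0 < d₂ := h₂.dpos
  set u : Polynomial ℝ := C c * p + derivative q with hu
  have hru : r = X * u := by rw [hr, hu]; ring
  have hr0 : r.eval 0 = 0 := by rw [hru]; simp
  have hu0 : u.eval 0 = r.coeff 1 := by
    conv_rhs => rw [hru, mul_comm]
    rw [show (1:ℕ) = 0 + 1 from rfl, Polynomial.coeff_mul_X,
      Polynomial.coeff_zero_eq_eval_zero]
  have hu0pos : 0 < u.eval 0 := by rw [hu0]; exact hc1
  have hVopen : IsOpen {x : ℝ | 0 < u.eval x} :=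
    isOpen_lt continuous_const u.continuous
  obtain ⟨l, w, h0mem, hsub⟩ := mem_nhds_iff_exists_Ioo_subset.1
    (hVopen.mem_nhds (by simpa using hu0pos))
  set s0 : ℝ := if 1 < d₂ then ρ₂ 1 else -1 with hs0
  have hs0neg : s0 < 0 := by
    rw [hs0]; split
    · exact h₂.neg le_rfl ‹_›
    · norm_num
  have hl0 : l < 0 := h0mem.1
  have hw0 : 0 < w := h0mem.2
  set t₀ : ℝ := max l s0 / 2 with ht₀
  have hmax : max l s0 < 0 := max_lt hl0 hs0neg
  have ht₀neg : t₀ < 0 := by rw [ht₀]; linarith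
  have ht₀gt : max l s0 < t₀ := by rw [ht₀]; linarith
  have hut₀ : 0 < u.eval t₀ :=
    hsub ⟨(le_max_left l s0).trans_lt ht₀gt, ht₀neg.trans hw0⟩
  have hrt₀ : r.eval t₀ < 0 := by
    rw [hru]; simp only [Polynomial.eval_mul, Polynomial.eval_X]
    exact mul_neg_of_neg_of_pos ht₀neg hut₀
  have ht₀gtρ : ∀ j, 1 ≤ j → j < d₂ → ρ₂ j < t₀ := by
    intro j h1j hj
    have hd2 : 1 < d₂ := lt_of_le_of_lt h1j hj
    have hm : ρ₂ j ≤ ρ₂ 1 := h₂.mono h1j hj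
    have hs : s0 = ρ₂ 1 := by rw [hs0, if_pos hd2]
    calc ρ₂ j ≤ ρ₂ 1 := hm
      _ = s0 := hs.symm
      _ ≤ max l s0 := le_max_right _ _
      _ < t₀ := ht₀gt
  -- sign of r at the negative roots of q
  have hsign : ∀ j, 1 ≤ j → j < d₂ → 0 < (-1:ℝ)^(j+1) * r.eval (ρ₂ j) := by
    intro j h1j hjd
    have hρneg : ρ₂ j < 0 := h₂.neg h1j hjd
    have hjd₁ : j ≤ d₁ := by omega
    have hup : ∀ i, i < j → i < d₁ → ρ₂ j < ρ₁ i := by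
      intro i hij hid
      have ha : ρ₁ (j-1) ≤ ρ₁ i := h₁.mono (by omega) (by omega)
      have hb : ρ₂ j < ρ₁ (j-1) := by
        have := hib (j-1) (by omega)
        rwa [Nat.sub_add_cancel h1j] at this
      linarith
    have hdown : ∀ i, j ≤ i → i < d₁ → ρ₁ i < ρ₂ j := by
      intro i hij hid
      have ha : ρ₁ i ≤ ρ₁ j := h₁.mono hij hid
      have hb := hia j h1j (lt_of_le_of_lt hij hid)
      linarith
    have hfilt : (Finset.range d₁).filter (fun i => ρ₂ j - ρ₁ i < 0) = Finset.range j := by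
      ext i
      simp only [Finset.mem_filter, Finset.mem_range, sub_neg]
      constructor
      · rintro ⟨hid, hlt⟩
        by_contra hij
        push_neg at hij
        have := hdown i hij hid
        linarith
      · intro hij
        have hid : i < d₁ := lt_of_lt_of_le hij hjd₁
        exact ⟨hid, hup i hij hid⟩
    have hpne : ∀ i ∈ Finset.range d₁, ρ₂ j - ρ₁ i ≠ 0 := by
      intro i hi
      rw [Finset.mem_range] at hi
      rcases lt_or_ge i j with hij | hij
      · exact ne_of_lt (by have := hup i hij hi; linarith)
      · exact ne_of_gt (by have := hdown i hij hi; linarith)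
    have hp1 := prod_sign (Finset.range d₁) (fun i => ρ₂ j - ρ₁ i) hpne
    rw [hfilt, Finset.card_range] at hp1
    have hpsign : 0 < (-1:ℝ)^j * p.eval (ρ₂ j) := by
      rw [h₁.evalEq]
      calc (0:ℝ) < p.leadingCoeff * ((-1)^j * ∏ i ∈ Finset.range d₁, (ρ₂ j - ρ₁ i)) :=
            mul_pos h₁.lead hp1
        _ = (-1)^j * (p.leadingCoeff * ∏ i ∈ Finset.range d₁, (ρ₂ j - ρ₁ i)) := by ring
    have hqne : ∀ i ∈ (Finset.range d₂).erase j, ρ₂ j - ρ₂ i ≠ 0 := by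
      intro i hi
      obtain ⟨hne, hir⟩ := Finset.mem_erase.1 hi
      rw [Finset.mem_range] at hir
      rcases lt_or_gt_of_ne hne with hlt | hgt
      · exact ne_of_lt (by have := h₂.anti hlt hjd; linarith)
      · exact ne_of_gt (by have := h₂.anti hgt hir; linarith)
    have hqfilt : ((Finset.range d₂).erase j).filter (fun i => ρ₂ j - ρ₂ i < 0)
        = Finset.range j := by
      ext i
      simp only [Finset.mem_filter, Finset.mem_erase, Finset.mem_range, sub_neg]
      constructor
      · rintro ⟨⟨hne, hir⟩, hlt⟩
        rcases lt_trichotomy i j with h | h | h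
        · exact h
        · exact absurd h hne
        · have := h₂.anti h hir; linarith
      · intro hij
        exact ⟨⟨by omega, by omega⟩, h₂.anti hij hjd⟩
    have hq1 := prod_sign _ _ hqne
    rw [hqfilt, Finset.card_range] at hq1
    have hqeval : (derivative q).eval (ρ₂ j)
        = q.leadingCoeff * ∏ i ∈ (Finset.range d₂).erase j, (ρ₂ j - ρ₂ i) := by
      conv_lhs => rw [h₂.fact]
      rw [Polynomial.derivative_C_mul,
        ← Finset.mul_prod_erase (Finset.range d₂) _ (Finset.mem_range.2 hjd),
        derivative_mul, Polynomial.derivative_X_sub_C]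
      simp [Polynomial.eval_prod]
    have hqsign : 0 < (-1:ℝ)^j * (derivative q).eval (ρ₂ j) := by
      rw [hqeval]
      calc (0:ℝ) < q.leadingCoeff * ((-1)^j * ∏ i ∈ (Finset.range d₂).erase j, (ρ₂ j - ρ₂ i)) :=
            mul_pos h₂.lead hq1
        _ = (-1)^j * (q.leadingCoeff * ∏ i ∈ (Finset.range d₂).erase j, (ρ₂ j - ρ₂ i)) := by
            ring
    have hreval : r.eval (ρ₂ j)
        = ρ₂ j * (c * p.eval (ρ₂ j) + (derivative q).eval (ρ₂ j)) := by
      rw [hr]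
      simp only [Polynomial.eval_add, Polynomial.eval_mul, Polynomial.eval_X,
        Polynomial.eval_C]
      ring
    have hinner : 0 < (-1:ℝ)^j * (c * p.eval (ρ₂ j) + (derivative q).eval (ρ₂ j)) := by
      have h1 : 0 < c * ((-1:ℝ)^j * p.eval (ρ₂ j)) := mul_pos hc hpsign
      calc (0:ℝ) < c * ((-1)^j * p.eval (ρ₂ j)) + (-1)^j * (derivative q).eval (ρ₂ j) := by
            linarith [hqsign]
        _ = (-1)^j * (c * p.eval (ρ₂ j) + (derivative q).eval (ρ₂ j)) := by ring
    rw [hreval]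
    have hnegρ : 0 < -ρ₂ j := by linarith
    calc (0:ℝ) < -ρ₂ j * ((-1)^j * (c * p.eval (ρ₂ j) + (derivative q).eval (ρ₂ j))) :=
          mul_pos hnegρ hinner
      _ = (-1)^(j+1) * (ρ₂ j * (c * p.eval (ρ₂ j) + (derivative q).eval (ρ₂ j))) := by
          rw [pow_succ]; ring
  -- roots of r strictly between consecutive roots of q
  set prev : ℕ → ℝ := fun j => if j = 1 then t₀ else ρ₂ (j-1) with hprev
  have hprevlt : ∀ j, 1 ≤ j → j < d₂ → ρ₂ j < prev j := by
    intro j h1 h2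
    rw [hprev]; dsimp only
    split
    · rename_i hj1; rw [hj1] at h2 ⊢; exact ht₀gtρ 1 le_rfl h2
    · exact h₂.anti (show j - 1 < j by omega) h2
  have hprevsign : ∀ j, 1 ≤ j → j < d₂ → 0 < (-1:ℝ)^j * r.eval (prev j) := by
    intro j h1 h2
    rw [hprev]; dsimp only
    split
    · rename_i hj1; rw [hj1, pow_one]; linarith
    · rename_i hj1
      have := hsign (j-1) (by omega) (by omega)
      rwa [Nat.sub_add_cancel h1] at this
  have hroots : ∀ j, 1 ≤ j → j < d₂ → ∃ yv, ρ₂ j < yv ∧ yv < prev j ∧ r.eval yv = 0 := by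
    intro j h1 h2
    have hmul := sign_mul_lemma (hprevsign j h1 h2) (hsign j h1 h2)
    rw [mul_comm] at hmul
    exact exists_root_Ioo r (hprevlt j h1 h2) hmul
  set y : ℕ → ℝ := fun j => if h : 1 ≤ j ∧ j < d₂ then (hroots j h.1 h.2).choose else 0
    with hydef
  have hyspec : ∀ j, 1 ≤ j → j < d₂ → ρ₂ j < y j ∧ y j < prev j ∧ r.eval (y j) = 0 := by
    intro j h1 h2
    rw [hydef]; dsimp only
    rw [dif_pos ⟨h1, h2⟩]
    exact (hroots j h1 h2).choose_spec
  have hprevle0 : ∀ j, 1 ≤ j → j < d₂ → prev j ≤ 0 := by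
    intro j h1 h2
    rw [hprev]; dsimp only
    split
    · exact ht₀neg.le
    · exact h₂.nonpos (show j - 1 < d₂ by omega)
  have hyneg : ∀ j, 1 ≤ j → j < d₂ → y j < 0 := by
    intro j h1 h2
    obtain ⟨_, hlt, _⟩ := hyspec j h1 h2
    have := hprevle0 j h1 h2
    linarith
  have hyy : ∀ j, 1 ≤ j → j + 1 < d₂ → y (j+1) < ρ₂ j := by
    intro j h1 h2
    obtain ⟨_, hlt, _⟩ := hyspec (j+1) (by omega) h2
    have hp : prev (j+1) = ρ₂ j := by
      rw [hprev]; dsimp only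
      rw [if_neg (by omega)]
      norm_num
    rw [hp] at hlt
    exact hlt
  -- the first d₂ roots of r
  set yy : ℕ → ℝ := fun j => if j = 0 then 0 else y j with hyyd
  have hyy0 : yy 0 = 0 := by simp [hyyd]
  have hyyj : ∀ j, 1 ≤ j → yy j = y j := by
    intro j h1; rw [hyyd]; dsimp only; rw [if_neg (by omega)]
  have hordyy : ∀ i j, i < j → j < d₂ → yy j < yy i := by
    intro i j hij hj
    have hj1 : 1 ≤ j := by omega
    rw [hyyj j hj1]
    rcases Nat.eq_zero_or_pos i with rfl | hi1
    · rw [hyy0]; exact hyneg j hj1 hj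
    · rw [hyyj i hi1]
      obtain ⟨hyj1, hyj2, _⟩ := hyspec j hj1 hj
      obtain ⟨hyi1, _, _⟩ := hyspec i hi1 (by omega)
      have hprevj : prev j ≤ ρ₂ i := by
        rw [hprev]; dsimp only
        rw [if_neg (by omega)]
        exact h₂.mono (by omega) (by omega)
      linarith
  have hrootyy : ∀ j, j < d₂ → r.eval (yy j) = 0 := by
    intro j hj
    rcases Nat.eq_zero_or_pos j with rfl | h1
    · rw [hyy0]; exact hr0
    · rw [hyyj j h1]; exact (hyspec j h1 hj).2.2
  have hinjyy : ∀ i, i < d₂ → ∀ j, j < d₂ → yy i = yy j → i = j := by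
    intro i hi j hj heq
    rcases lt_trichotomy i j with h | h | h
    · exact absurd heq (ne_of_gt (hordyy i j h hj))
    · exact h
    · exact absurd heq (ne_of_lt (hordyy j i h hi))
  rcases (by omega : d₃ = d₂ ∨ d₃ = d₂ + 1) with hcase | hcase
  · -- no extra root
    subst hcase
    have hfact := factor_of_roots r hrne d₃ hdeg yy hinjyy hrootyy
    refine ⟨yy, ⟨by omega, hdeg, hlead, hyy0, fun i j hij hj => hordyy i j hij hj, hfact⟩,
      ?_, ?_⟩
    · intro j h1 h2
      rw [hyyj j h1]
      exact (hyspec j h1 h2).1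
    · intro j hj
      rw [hyyj (j+1) (by omega)]
      rcases Nat.eq_zero_or_pos j with rfl | h1
      · rw [h₂.zero]
        exact hyneg 1 le_rfl hj
      · exact hyy j h1 hj
  · -- one extra root
    set M : Polynomial ℝ := ∏ a ∈ (Finset.range d₂).image yy, (X - C a) with hM
    have hMdvd : M ∣ r := by
      have h1 := roots_le r hrne d₂ yy hinjyy hrootyy
      rw [hM, Finset.prod_eq_multiset_prod]
      exact dvd_trans (Multiset.prod_dvd_prod_of_le (Multiset.map_le_map h1))
        (Polynomial.prod_multiset_X_sub_C_dvd r)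
    obtain ⟨v, hv⟩ := hMdvd
    have hMmonic : M.Monic :=
      Polynomial.monic_prod_of_monic _ _ (fun a _ => Polynomial.monic_X_sub_C a)
    have hvne : v ≠ 0 := by rintro rfl; rw [mul_zero] at hv; exact hrne hv
    have hMdeg : M.natDegree = d₂ := by
      rw [hM, Polynomial.natDegree_prod _ _ (fun a _ => Polynomial.X_sub_C_ne_zero a)]
      simp only [Polynomial.natDegree_X_sub_C, Finset.sum_const, smul_eq_mul, mul_one]
      exact card_image_roots d₂ yy hinjyy
    have hvdeg : v.natDegree = 1 := by
      have := Polynomial.natDegree_mul hMmonic.ne_zero hvne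
      rw [← hv, hdeg, hMdeg] at this
      omega
    have hvlead : v.leadingCoeff = r.leadingCoeff := by
      rw [hv, Polynomial.leadingCoeff_mul, hMmonic.leadingCoeff, one_mul]
    have hc1pos : 0 < v.coeff 1 := by
      have hh : v.coeff 1 = v.leadingCoeff := by rw [← hvdeg]; exact Polynomial.coeff_natDegree
      rw [hh, hvlead]; exact hlead
    set z : ℝ := -(v.coeff 0) / v.coeff 1 with hz
    have hvform := Polynomial.eq_X_add_C_of_natDegree_le_one (le_of_eq hvdeg)
    have hveq : ∀ x, v.eval x = v.coeff 1 * x + v.coeff 0 := by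
      intro x; conv_lhs => rw [hvform]
      simp
    have hvz : v.eval z = 0 := by
      rw [hveq, hz]
      field_simp
      ring
    have hrz : r.eval z = 0 := by rw [hv, Polynomial.eval_mul, hvz, mul_zero]
    set t : ℝ := if d₂ = 1 then t₀ else ρ₂ (d₂ - 1) with ht
    have htneg : t < 0 := by
      rw [ht]; split
      · exact ht₀neg
      · rename_i hd1
        exact h₂.neg (show 1 ≤ d₂ - 1 by omega) (show d₂ - 1 < d₂ by omega)
    have hty : ∀ j, j < d₂ → t < yy j := by
      intro j hj
      rcases Nat.eq_zero_or_pos j with rfl | h1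
      · rw [hyy0]; exact htneg
      · rw [hyyj j h1]
        have hspec := (hyspec j h1 hj).1
        have hle : t ≤ ρ₂ j := by
          rw [ht]; split
          · rename_i hd1; exact absurd h1 (by omega)
          · rename_i hd1
            exact h₂.mono (show j ≤ d₂ - 1 by omega) (show d₂ - 1 < d₂ by omega)
        linarith
    have hsignt : 0 < (-1:ℝ)^d₂ * r.eval t := by
      rw [ht]; split
      · rename_i h1; rw [h1, pow_one]; linarith
      · rename_i h1
        have := hsign (d₂ - 1) (by omega) (by omega)
        rwa [Nat.sub_add_cancel (by omega)] at this
    have hMt : 0 < (-1:ℝ)^d₂ * M.eval t := by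
      have hne : ∀ a ∈ (Finset.range d₂).image yy, t - a ≠ 0 := by
        intro a ha
        obtain ⟨j, hj, rfl⟩ := Finset.mem_image.1 ha
        exact ne_of_lt (by have := hty j (Finset.mem_range.1 hj); linarith)
      have hps := prod_sign _ _ hne
      have hfilt : ((Finset.range d₂).image yy).filter (fun a => t - a < 0)
          = (Finset.range d₂).image yy := by
        apply Finset.filter_true_of_mem
        intro a ha
        obtain ⟨j, hj, rfl⟩ := Finset.mem_image.1 ha
        have := hty j (Finset.mem_range.1 hj); linarith
      rw [hfilt, card_image_roots d₂ yy hinjyy] at hps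
      rw [hM, Polynomial.eval_prod]
      simpa using hps
    have hrMv : r.eval t = M.eval t * v.eval t := by rw [hv, Polynomial.eval_mul]
    have hvt : 0 < v.eval t := by
      rcases Nat.even_or_odd d₂ with he | ho
      · rw [he.neg_one_pow, one_mul] at hsignt hMt
        rw [hrMv] at hsignt
        nlinarith
      · rw [ho.neg_one_pow] at hsignt hMt
        rw [hrMv] at hsignt
        nlinarith
    have hzt : z < t := by
      by_contra hle
      push_neg at hle
      have hmul : v.coeff 1 * t ≤ v.coeff 1 * z := mul_le_mul_of_nonneg_left hle hc1pos.le
      have h1 := hveq t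
      have h2 := hveq z
      rw [hvz] at h2
      rw [h1] at hvt
      linarith
    set ρ₃ : ℕ → ℝ := fun j => if j < d₂ then yy j else z with hρ₃
    have hρval : ∀ j, j < d₂ → ρ₃ j = yy j := by
      intro j hj; rw [hρ₃]; dsimp only; rw [if_pos hj]
    have hρz : ρ₃ d₂ = z := by rw [hρ₃]; dsimp only; rw [if_neg (by omega)]
    have hzlt : ∀ i, i < d₂ → z < yy i := fun i hi => hzt.trans (hty i hi)
    have hord : ∀ i j, i < j → j < d₃ → ρ₃ j < ρ₃ i := by
      intro i j hij hj
      have hi2 : i < d₂ := by omega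
      rw [hρval i hi2]
      rcases lt_or_ge j d₂ with hj2 | hj2
      · rw [hρval j hj2]; exact hordyy i j hij hj2
      · have hjeq : j = d₂ := by omega
        rw [hjeq, hρz]; exact hzlt i hi2
    have hrootall : ∀ j, j < d₃ → r.eval (ρ₃ j) = 0 := by
      intro j hj
      rcases lt_or_ge j d₂ with hj2 | hj2
      · rw [hρval j hj2]; exact hrootyy j hj2
      · have hjeq : j = d₂ := by omega
        rw [hjeq, hρz]; exact hrz
    have hinj : ∀ i, i < d₃ → ∀ j, j < d₃ → ρ₃ i = ρ₃ j → i = j := by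
      intro i hi j hj heq
      rcases lt_trichotomy i j with h | h | h
      · exact absurd heq (ne_of_gt (hord i j h hj))
      · exact h
      · exact absurd heq (ne_of_lt (hord j i h hi))
    have hfact := factor_of_roots r hrne d₃ hdeg ρ₃
      (fun i hi j hj => hinj i hi j hj) hrootall
    have hρ0 : ρ₃ 0 = 0 := by
      rw [hρval 0 (by omega)]; exact hyy0
    refine ⟨ρ₃, ⟨by omega, hdeg, hlead, hρ0, fun i j hij hj => hord i j hij hj, hfact⟩,
      ?_, ?_⟩
    · intro j h1 h2
      rw [hρval j h2, hyyj j h1]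
      exact (hyspec j h1 h2).1
    · intro j hj
      rcases lt_or_ge (j+1) d₂ with hj2 | hj2
      · rw [hρval (j+1) hj2, hyyj (j+1) (by omega)]
        rcases Nat.eq_zero_or_pos j with rfl | h1
        · rw [h₂.zero]
          exact hyneg 1 le_rfl hj2
        · exact hyy j h1 hj2
      · have hjeq : j + 1 = d₂ := by omega
        rw [hjeq, hρz]
        have hle : t ≤ ρ₂ j := by
          rw [ht]; split
          · rename_i hd1
            have hj0 : j = 0 := by omega
            rw [hj0, h₂.zero]
            exact ht₀neg.le
          · have hde : d₂ - 1 = j := by omega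
            rw [hde]
        linarith

lemma sP_two : sP 2 = X := by
  rw [sP]
  have h0 : sstar 2 0 = 0 := rfl
  have h1 : sstar 2 1 = 1 := rfl
  have h2 : sstar 2 2 = 0 := rfl
  rw [Finset.sum_range_succ, Finset.sum_range_succ, Finset.sum_range_succ,
    Finset.sum_range_zero, h0, h1, h2]
  simp

lemma sP_three : sP 3 = X := by
  rw [sP]
  have h0 : sstar 3 0 = 0 := rfl
  have h1 : sstar 3 1 = 1 := rfl
  have h2 : sstar 3 2 = 0 := rfl
  have h3 : sstar 3 3 = 0 := rfl
  rw [Finset.sum_range_succ, Finset.sum_range_succ, Finset.sum_range_succ,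
    Finset.sum_range_succ, Finset.sum_range_zero, h0, h1, h2, h3]
  simp

lemma RD_of_eq_X {p : Polynomial ℝ} (hp : p = X) : RD p 1 (fun _ => 0) := by
  subst hp
  refine ⟨Nat.one_pos, Polynomial.natDegree_X, ?_, rfl, ?_, ?_⟩
  · rw [Polynomial.leadingCoeff_X]; norm_num
  · intro i j hij hj; omega
  · rw [Polynomial.leadingCoeff_X]
    simp

lemma sP_coeff_one_pos (n : ℕ) (hn : 2 ≤ n) : 0 < (sP n).coeff 1 := by
  rw [sP_coeff]
  have := sstar_one_pos n hn
  positivity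

lemma main_ind : ∀ m : ℕ, ∃ ρ₁ ρ₂ : ℕ → ℝ,
    RD (sP (m+2)) ((m+2)/2) ρ₁ ∧ RD (sP (m+3)) ((m+3)/2) ρ₂ ∧
    (∀ j, 1 ≤ j → j < (m+2)/2 → ρ₁ j < ρ₂ j) ∧
    (∀ j, j + 1 < (m+3)/2 → ρ₂ (j+1) < ρ₁ j) := by
  intro m
  induction m with
  | zero =>
      refine ⟨fun _ => 0, fun _ => 0, RD_of_eq_X sP_two, RD_of_eq_X sP_three, ?_, ?_⟩
      · intro j h1 h2; omega
      · intro j hj; omega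
  | succ m ih =>
      obtain ⟨ρ₁, ρ₂, h1, h2, ia, ib⟩ := ih
      have hrec := sP_rec (m+2)
      have hstep := step (p := sP (m+2)) (q := sP (m+3)) (r := sP (m+2+2))
        (c := ((m+2 : ℕ) : ℝ) + 1) (by positivity) h1 h2
        (by omega) (by omega) ia ib (by exact_mod_cast hrec)
        (sP_natDegree (m+4) (by omega)) (by omega) (by omega)
        (sP_leadingCoeff_pos (m+4) (by omega)) (sP_coeff_one_pos (m+4) (by omega))
      obtain ⟨ρ₃, h3, ia', ib'⟩ := hstep
      exact ⟨ρ₂, ρ₃, h2, h3, ia', ib'⟩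

lemma sP_RD (n : ℕ) (hn : 2 ≤ n) : ∃ ρ : ℕ → ℝ, RD (sP n) (n/2) ρ := by
  rcases eq_or_lt_of_le hn with rfl | hlt
  · exact ⟨fun _ => 0, RD_of_eq_X sP_two⟩
  · have h : n - 3 + 3 = n := by omega
    obtain ⟨ρ₁, ρ₂, _, h2, _, _⟩ := main_ind (n - 3)
    rw [h] at h2
    exact ⟨ρ₂, h2⟩


lemma SPoly_eq_sP (n : ℕ) : SPoly n = sP n := by
  unfold SPoly sP
  exact Finset.sum_congr rfl (fun k _ => by rw [SStar_eq_sstar])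

/-- For `n ≥ 2`, all roots of `S_n(x)` are real and nonpositive, and each root has
multiplicity one. -/
theorem sPoly_roots_real_nonpos_simple (n : ℕ) (hn : 2 ≤ n) :
    (∀ z : ℂ, ((SPoly n).map (algebraMap ℝ ℂ)).IsRoot z →
      ∃ x : ℝ, x ≤ 0 ∧ (x : ℂ) = z) ∧
    (∀ x : ℝ, (SPoly n).IsRoot x → Polynomial.rootMultiplicity x (SPoly n) = 1) := by
  obtain ⟨ρ, h⟩ := sP_RD n hn
  have hSP := SPoly_eq_sP n
  set d := n / 2 with hd
  have hL : (sP n).leadingCoeff ≠ 0 := ne_of_gt h.lead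
  constructor
  · intro z hz
    rw [hSP] at hz
    have hmap : (sP n).map (algebraMap ℝ ℂ) =
        C ((algebraMap ℝ ℂ) (sP n).leadingCoeff)
          * ∏ j ∈ Finset.range d, (X - C ((ρ j : ℂ))) := by
      conv_lhs => rw [h.fact]
      rw [Polynomial.map_mul, Polynomial.map_C, Polynomial.map_prod]
      simp [Polynomial.map_sub]
    rw [Polynomial.IsRoot, hmap] at hz
    simp only [Polynomial.eval_mul, Polynomial.eval_C, Polynomial.eval_prod,
      Polynomial.eval_sub, Polynomial.eval_X, mul_eq_zero] at hz
    rcases hz with hz | hz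
    · exact absurd hz (by simpa using hL)
    · rw [Finset.prod_eq_zero_iff] at hz
      obtain ⟨j, hj, hj0⟩ := hz
      rw [sub_eq_zero] at hj0
      exact ⟨ρ j, h.nonpos (Finset.mem_range.1 hj), hj0.symm⟩
  · intro x hx
    rw [hSP] at hx ⊢
    have hinj : ∀ i ∈ Finset.range d, ∀ j ∈ Finset.range d, ρ i = ρ j → i = j := by
      intro i hi j hj heq
      rcases lt_trichotomy i j with hh | hh | hh
      · exact absurd heq (ne_of_gt (h.anti hh (Finset.mem_range.1 hj)))
      · exact hh
      · exact absurd heq (ne_of_lt (h.anti hh (Finset.mem_range.1 hi)))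
    have hprod : ∏ j ∈ Finset.range d, (X - C (ρ j))
        = ∏ a ∈ (Finset.range d).image ρ, (X - C a) :=
      (Finset.prod_image (f := fun a => X - C a) hinj).symm
    have hroots : (sP n).roots = ((Finset.range d).image ρ).val := by
      conv_lhs => rw [h.fact]
      rw [Polynomial.roots_C_mul _ hL, hprod, Polynomial.roots_prod_X_sub_C]
    have hxmem : x ∈ (Finset.range d).image ρ := by
      have hx' := hx
      rw [Polynomial.IsRoot, h.evalEq] at hx'
      rcases mul_eq_zero.1 hx' with h0 | h0
      · exact absurd h0 hL
      · rw [Finset.prod_eq_zero_iff] at h0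
        obtain ⟨j, hj, hj0⟩ := h0
        rw [sub_eq_zero] at hj0
        exact Finset.mem_image.2 ⟨j, hj, hj0.symm⟩
    classical
    rw [← Polynomial.count_roots, hroots]
    exact Multiset.count_eq_one_of_mem ((Finset.range d).image ρ).nodup hxmem
end

section
/- For fixed n, the sequence k ↦ S(n,k) of Stirling numbers of the second kind is strictly log-concave: S(n,k)² > S(n,k−1)·S(n,k+1) for 2 ≤ k ≤ n−1. -/
open Finset Polynomial

section Auxiliary

open Finset

/-- Recursive Stirling numbers of the second kind. -/
def StRec : ℕ → ℕ → ℕ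
  | 0, 0 => 1
  | 0, _+1 => 0
  | _+1, 0 => 0
  | n+1, k+1 => (k+1) * StRec n (k+1) + StRec n k

lemma StRec_zero_right (n : ℕ) : StRec (n+1) 0 = 0 := rfl

lemma StRec_eq_zero : ∀ n k, n < k → StRec n k = 0
  | 0, _+1, _ => rfl
  | n+1, k+1, h => by
      have h' : n < k := Nat.lt_of_succ_lt_succ h
      simp [StRec, StRec_eq_zero n (k+1) (Nat.lt_succ_of_lt h'), StRec_eq_zero n k h']

lemma StRec_pos : ∀ n k, 1 ≤ k → k ≤ n → 0 < StRec n k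
  | 0, _, h1, h2 => by omega
  | n+1, k+1, _, h2 => by
      rcases Nat.eq_zero_or_pos k with rfl | hk
      · rcases Nat.eq_zero_or_pos n with rfl | hn
        · simp [StRec]
        · have := StRec_pos n 1 le_rfl hn
          simp [StRec]; omega
      · have := StRec_pos n k hk (by omega)
        simp [StRec]; omega

/-- weak log-concavity -/
lemma StRec_wlc : ∀ n k, StRec n k * StRec n (k+2) ≤ StRec n (k+1)^2 := by
  intro n
  induction n with
  | zero => intro k; simp [StRec_eq_zero 0 (k+2) (by omega)]
  | succ n ih =>
    intro k
    -- cases on k vs n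
    rcases Nat.lt_or_ge n (k+1) with h | h
    · -- StRec (n+1) (k+2) = 0
      rw [StRec_eq_zero (n+1) (k+2) (by omega)]
      simp
    rcases Nat.eq_zero_or_pos k with rfl | hk
    · -- k = 0 : StRec (n+1) 0 = 0
      rw [StRec_zero_right]; simp
    -- main case : 1 ≤ k, k+1 ≤ n
    obtain ⟨m, rfl⟩ : ∃ m, k = m + 1 := ⟨k - 1, by omega⟩
    set A := StRec n m with hA
    set B := StRec n (m+1) with hB
    set C := StRec n (m+2) with hC
    set D := StRec n (m+3) with hD
    have h1 : B * D ≤ C^2 := ih (m+1)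
    have h2 : A * C ≤ B^2 := ih m
    have hCpos : 0 < C := StRec_pos n (m+2) (by omega) (by omega)
    have hBpos : 0 < B := StRec_pos n (m+1) (by omega) (by omega)
    have h3 : A * D ≤ B * C := by
      exact Nat.le_of_mul_le_mul_right (by nlinarith) (by positivity)
    have e1 : StRec (n+1) (m+1) = (m+1) * B + A := rfl
    have e2 : StRec (n+1) (m+2) = (m+2) * C + B := rfl
    have e3 : StRec (n+1) (m+3) = (m+3) * D + C := rfl
    rw [e1, e2, e3]
    have h1' : (m+1)*(m+3)*(B*D) ≤ (m+1)*(m+3)*C^2 := Nat.mul_le_mul_left _ h1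
    have h3' : (m+3)*(A*D) ≤ (m+3)*(B*C) := Nat.mul_le_mul_left _ h3
    nlinarith [h1', h3', h2]

/-- strict log-concavity step -/
lemma StRec_slc (n k : ℕ) (hk : 1 ≤ k) (hkn : k + 1 ≤ n) :
    StRec (n+1) k * StRec (n+1) (k+2) < StRec (n+1) (k+1)^2 := by
  obtain ⟨m, rfl⟩ : ∃ m, k = m + 1 := ⟨k - 1, by omega⟩
  set A := StRec n m with hA
  set B := StRec n (m+1) with hB
  set C := StRec n (m+2) with hC
  set D := StRec n (m+3) with hD
  have h1 : B * D ≤ C^2 := StRec_wlc n (m+1)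
  have h2 : A * C ≤ B^2 := StRec_wlc n m
  have hCpos : 0 < C := StRec_pos n (m+2) (by omega) (by omega)
  have hBpos : 0 < B := StRec_pos n (m+1) (by omega) (by omega)
  have h3 : A * D ≤ B * C := by
    exact Nat.le_of_mul_le_mul_right (by nlinarith) (by positivity)
  have e1 : StRec (n+1) (m+1) = (m+1) * B + A := rfl
  have e2 : StRec (n+1) (m+2) = (m+2) * C + B := rfl
  have e3 : StRec (n+1) (m+3) = (m+3) * D + C := rfl
  rw [e1, e2, e3]
  have h1' : (m+1)*(m+3)*(B*D) ≤ (m+1)*(m+3)*C^2 := Nat.mul_le_mul_left _ h1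
  have h3' : (m+3)*(A*D) ≤ (m+3)*(B*C) := Nat.mul_le_mul_left _ h3
  nlinarith [h1', h3', h2, hCpos]


variable {α : Type*} [DecidableEq α] {β : Type*} [DecidableEq β]

/-- Number of partitions of a finset into `k` parts. -/
noncomputable def pc (s : Finset α) (k : ℕ) : ℕ :=
  Nat.card {P : Finpartition s // P.parts.card = k}

lemma pc_empty (k : ℕ) : pc (∅ : Finset α) k = if k = 0 then 1 else 0 := by
  classical
  rcases eq_or_ne k 0 with rfl | hk
  · rw [if_pos rfl, pc, Nat.card_eq_one_iff_unique]
    constructor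
    · constructor
      rintro ⟨P, hP⟩ ⟨Q, hQ⟩
      ext1
      ext1
      rw [Finset.card_eq_zero] at hP hQ
      rw [hP, hQ]
    · exact ⟨⟨Finpartition.empty _ |>.copy (by simp), by simp [Finpartition.empty]⟩⟩
  · simp only [if_neg hk, pc]
    rw [Nat.card_eq_zero]
    left
    rw [isEmpty_subtype]
    intro P
    have : P.parts = ∅ := by
      rw [Finpartition.parts_eq_empty_iff]; rfl
    simp [this, eq_comm, hk]

lemma pc_zero {s : Finset α} (hs : s.Nonempty) : pc s 0 = 0 := by
  rw [pc, Nat.card_eq_zero]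
  left
  rw [isEmpty_subtype]
  intro P hP
  rw [Finset.card_eq_zero, Finpartition.parts_eq_empty_iff, Finset.bot_eq_empty] at hP
  exact hs.ne_empty hP

section Rec
variable {s : Finset α} {a : α}

lemma sup_erase_singleton (P : Finpartition s) (ha : a ∈ s) (hsing : {a} ∈ P.parts) :
    (P.parts.erase {a}).sup id = s.erase a := by
  ext x
  simp only [Finset.mem_sup, Finset.mem_erase, id]
  constructor
  · rintro ⟨t, ⟨htne, ht⟩, hxt⟩
    refine ⟨fun hxa => ?_, P.le ht hxt⟩
    subst hxa
    exact htne (P.eq_of_mem_parts ht hsing hxt (Finset.mem_singleton_self x))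
  · rintro ⟨hxa, hxs⟩
    obtain ⟨t, ht, hxt⟩ := P.exists_mem hxs
    refine ⟨t, ⟨fun h => hxa ?_, ht⟩, hxt⟩
    subst h
    exact Finset.mem_singleton.mp hxt

/-- partitions of `s` with `{a}` as a part, to partitions of `s.erase a`. -/
noncomputable def equivSingleton (ha : a ∈ s) (k : ℕ) :
    {P : Finpartition s // P.parts.card = k + 1 ∧ {a} ∈ P.parts} ≃
      {Q : Finpartition (s.erase a) // Q.parts.card = k} where
  toFun P := ⟨P.1.ofSubset (Finset.erase_subset _ _)
      (sup_erase_singleton P.1 ha P.2.2),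
    by simp [Finpartition.ofSubset, Finset.card_erase_of_mem P.2.2, P.2.1]⟩
  invFun Q := ⟨Q.1.extend (b := {a}) (by simp [Finset.bot_eq_empty])
      (by simp) (by
        rw [Finset.sup_eq_union, Finset.union_comm]
        ext x; simp only [Finset.mem_union, Finset.mem_singleton, Finset.mem_erase]
        constructor
        · rintro (rfl | ⟨-, h⟩); exacts [ha, h]
        · intro hx; rcases eq_or_ne x a with rfl | h
          exacts [Or.inl rfl, Or.inr ⟨h, hx⟩]),
    by
      constructor
      · rw [Finpartition.card_extend, Q.2]
      · simp [Finpartition.extend]⟩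
  left_inv P := by
    ext1; ext1
    simp only [Finpartition.extend, Finpartition.ofSubset]
    exact Finset.insert_erase P.2.2
  right_inv Q := by
    ext1; ext1
    simp only [Finpartition.extend, Finpartition.ofSubset]
    apply Finset.erase_insert
    intro h
    have := Q.1.le h (Finset.mem_singleton_self a)
    exact (Finset.notMem_erase a s) this
end Rec


section Rec
variable {s : Finset α} {a : α}

lemma not_mem_of_mem_erasePart (Q : Finpartition (s.erase a)) {q : Finset α}
    (hq : q ∈ Q.parts) : a ∉ q := fun h => (Finset.notMem_erase a s) (Q.le hq h)

lemma part_a_mem (P : Finpartition s) (ha : a ∈ s) : P.part a ∈ P.parts := P.part_mem.mpr ha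

lemma erase_part_nonempty (P : Finpartition s) (ha : a ∈ s) (hns : {a} ∉ P.parts)
    {t : Finset α} (ht : t ∈ P.parts) : (t.erase a).Nonempty := by
  by_cases hat : a ∈ t
  · have hta : t ≠ {a} := fun h => hns (h ▸ ht)
    obtain ⟨x, hx, hxa⟩ : ∃ x ∈ t, x ≠ a := by
      by_contra h
      push_neg at h
      apply hta
      ext y
      simp only [Finset.mem_singleton]
      exact ⟨fun hy => h y hy, fun hy => hy ▸ hat⟩
    exact ⟨x, Finset.mem_erase.mpr ⟨hxa, hx⟩⟩
  · rw [Finset.erase_eq_of_notMem hat]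
    exact P.nonempty_of_mem_parts ht

lemma erase_eq_self_of_ne_part (P : Finpartition s) (ha : a ∈ s) {t : Finset α}
    (ht : t ∈ P.parts) (hne : t ≠ P.part a) : t.erase a = t := by
  apply Finset.erase_eq_of_notMem
  intro hat
  exact hne (P.part_eq_of_mem ht hat).symm

/-- Remove `a` from the part containing it. -/
def eraseAvoid (P : Finpartition s) (ha : a ∈ s) (hns : {a} ∉ P.parts) :
    Finpartition (s.erase a) where
  parts := P.parts.image (·.erase a)
  supIndep := (P.disjoint.image_finset_of_le fun _ => Finset.erase_subset _ _).supIndep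
  sup_parts := by
    ext x
    simp only [Finset.sup_image, Finset.mem_sup, Function.comp, id, Finset.mem_erase]
    constructor
    · rintro ⟨t, ht, hxa, hxt⟩
      exact ⟨hxa, P.le ht hxt⟩
    · rintro ⟨hxa, hxs⟩
      obtain ⟨t, ht, hxt⟩ := P.exists_mem hxs
      exact ⟨t, ht, hxa, hxt⟩
  bot_notMem := by
    simp only [Finset.bot_eq_empty, Finset.mem_image]
    rintro ⟨t, ht, h⟩
    exact (erase_part_nonempty P ha hns ht).ne_empty h

lemma eraseAvoid_parts (P : Finpartition s) (ha : a ∈ s) (hns : {a} ∉ P.parts) :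
    (eraseAvoid P ha hns).parts = P.parts.image (·.erase a) := rfl

lemma erase_injOn_parts (P : Finpartition s) (ha : a ∈ s) (hns : {a} ∉ P.parts) :
    Set.InjOn (fun t : Finset α => t.erase a) ↑P.parts := by
  intro t ht u hu h
  simp only at h
  by_contra hne
  obtain ⟨x, hx⟩ := erase_part_nonempty P ha hns ht
  have hxu : x ∈ u.erase a := h ▸ hx
  exact Finset.disjoint_left.mp (P.disjoint ht hu hne)
    (Finset.mem_of_mem_erase hx) (Finset.mem_of_mem_erase hxu)

lemma card_eraseAvoid (P : Finpartition s) (ha : a ∈ s) (hns : {a} ∉ P.parts) :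
    (eraseAvoid P ha hns).parts.card = P.parts.card :=
  Finset.card_image_of_injOn (erase_injOn_parts P ha hns)

/-- Add `a` to the part `p` of a partition of `s.erase a`. -/
def insertPart (ha : a ∈ s) (Q : Finpartition (s.erase a)) (p : Finset α) (hp : p ∈ Q.parts) :
    Finpartition s where
  parts := insert (insert a p) (Q.parts.erase p)
  supIndep := by
    rw [Finset.supIndep_iff_pairwiseDisjoint, Finset.coe_insert]
    refine Set.PairwiseDisjoint.insert ?_ ?_
    · exact Q.disjoint.subset (by simp [Finset.erase_subset])
    · intro q hq hne
      simp only [Finset.coe_erase, Set.mem_diff, Finset.mem_coe, Set.mem_singleton_iff] at hq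
      simp only [id_eq]
      rw [Finset.disjoint_insert_left]
      have hd : Disjoint (id p) (id q) := Q.disjoint hp hq.1 (fun h => hq.2 h.symm)
      simp only [id_eq] at hd
      exact ⟨not_mem_of_mem_erasePart Q hq.1, hd⟩
  sup_parts := by
    ext x
    rw [Finset.mem_sup]
    constructor
    · rintro ⟨t, ht, hxt⟩
      rw [Finset.mem_insert] at ht
      rcases ht with rfl | ht
      · rcases Finset.mem_insert.mp hxt with rfl | hxp
        · exact ha
        · exact Finset.mem_of_mem_erase (Q.le hp hxp)
      · exact Finset.mem_of_mem_erase (Q.le (Finset.mem_of_mem_erase ht) hxt)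
    · intro hxs
      rcases eq_or_ne x a with rfl | hxa
      · exact ⟨insert x p, Finset.mem_insert_self _ _, Finset.mem_insert_self _ _⟩
      · obtain ⟨t, ht, hxt⟩ := Q.exists_mem (Finset.mem_erase.mpr ⟨hxa, hxs⟩)
        rcases eq_or_ne t p with rfl | htp
        · exact ⟨insert a t, Finset.mem_insert_self _ _, Finset.mem_insert_of_mem hxt⟩
        · exact ⟨t, Finset.mem_insert_of_mem (Finset.mem_erase.mpr ⟨htp, ht⟩), hxt⟩
  bot_notMem := by
    simp only [Finset.bot_eq_empty, Finset.mem_insert]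
    rintro (h | h)
    · exact (Finset.insert_nonempty a p).ne_empty h.symm
    · exact Q.bot_notMem (Finset.mem_of_mem_erase h)

lemma insertPart_parts (ha : a ∈ s) (Q : Finpartition (s.erase a)) (p : Finset α)
    (hp : p ∈ Q.parts) :
    (insertPart ha Q p hp).parts = insert (insert a p) (Q.parts.erase p) := rfl

lemma insert_notMem_erase (ha : a ∈ s) (Q : Finpartition (s.erase a)) (p : Finset α) :
    insert a p ∉ Q.parts.erase p := fun h =>
  not_mem_of_mem_erasePart Q (Finset.mem_of_mem_erase h) (Finset.mem_insert_self a p)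

lemma card_insertPart (ha : a ∈ s) (Q : Finpartition (s.erase a)) (p : Finset α)
    (hp : p ∈ Q.parts) :
    (insertPart ha Q p hp).parts.card = Q.parts.card := by
  rw [insertPart_parts, Finset.card_insert_of_notMem (insert_notMem_erase ha Q p),
    Finset.card_erase_of_mem hp]
  have : 0 < Q.parts.card := Finset.card_pos.mpr ⟨p, hp⟩
  omega

lemma singleton_not_mem_insertPart (ha : a ∈ s) (Q : Finpartition (s.erase a)) (p : Finset α)
    (hp : p ∈ Q.parts) : ({a} : Finset α) ∉ (insertPart ha Q p hp).parts := by
  rw [insertPart_parts]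
  simp only [Finset.mem_insert]
  rintro (h | h)
  · obtain ⟨x, hx⟩ := Q.nonempty_of_mem_parts hp
    have hxa : x ≠ a := fun hh => not_mem_of_mem_erasePart Q hp (hh ▸ hx)
    have : x ∈ ({a} : Finset α) := h ▸ Finset.mem_insert_of_mem hx
    exact hxa (Finset.mem_singleton.mp this)
  · exact not_mem_of_mem_erasePart Q (Finset.mem_of_mem_erase h) (Finset.mem_singleton_self a)

lemma insertPart_eraseAvoid (P : Finpartition s) (ha : a ∈ s) (hns : {a} ∉ P.parts) :
    insertPart ha (eraseAvoid P ha hns) ((P.part a).erase a)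
      (Finset.mem_image_of_mem _ (P.part_mem.mpr ha)) = P := by
  have hpa : a ∈ P.part a := P.mem_part ha
  ext1
  show insert (insert a ((P.part a).erase a)) ((P.parts.image fun t => t.erase a).erase ((P.part a).erase a)) = P.parts
  have h0 : insert a ((P.part a).erase a) = P.part a := Finset.insert_erase hpa
  have h1 : (P.parts.image fun t => t.erase a).erase ((P.part a).erase a)
      = P.parts.erase (P.part a) := by
    ext u
    simp only [Finset.mem_erase, Finset.mem_image]
    constructor
    · rintro ⟨hne, t, ht, rfl⟩
      have htp : t ≠ P.part a := fun h => hne (by rw [h])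
      rw [erase_eq_self_of_ne_part P ha ht htp]
      exact ⟨htp, ht⟩
    · rintro ⟨hne, hu⟩
      have heq : u.erase a = u := erase_eq_self_of_ne_part P ha hu hne
      refine ⟨?_, u, hu, heq⟩
      intro h
      obtain ⟨x, hx⟩ := erase_part_nonempty P ha hns (P.part_mem.mpr ha)
      have hxu : x ∈ u := h.symm ▸ hx
      have hxp : x ∈ P.part a := Finset.mem_of_mem_erase hx
      exact Finset.disjoint_left.mp (P.disjoint hu (P.part_mem.mpr ha) hne) hxu hxp
  rw [h0, h1, Finset.insert_erase (P.part_mem.mpr ha)]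

lemma eraseAvoid_insertPart (ha : a ∈ s) (Q : Finpartition (s.erase a)) (p : Finset α)
    (hp : p ∈ Q.parts) :
    eraseAvoid (insertPart ha Q p hp) ha (singleton_not_mem_insertPart ha Q p hp) = Q := by
  have hap : a ∉ p := not_mem_of_mem_erasePart Q hp
  ext1
  rw [eraseAvoid_parts, insertPart_parts, Finset.image_insert, Finset.erase_insert hap]
  have : (Q.parts.erase p).image (·.erase a) = Q.parts.erase p := by
    rw [Finset.image_congr (g := id) ?_, Finset.image_id]
    intro q hq
    exact Finset.erase_eq_of_notMem (not_mem_of_mem_erasePart Q (Finset.mem_of_mem_erase hq))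
  rw [this, Finset.insert_erase hp]

lemma part_insertPart (ha : a ∈ s) (Q : Finpartition (s.erase a)) (p : Finset α)
    (hp : p ∈ Q.parts) : (insertPart ha Q p hp).part a = insert a p :=
  Finpartition.part_eq_of_mem _ (by rw [insertPart_parts]; exact Finset.mem_insert_self _ _)
    (Finset.mem_insert_self a p)

/-- partitions of `s` where `{a}` is not a part ≃ pairs (partition of `s.erase a`, chosen part). -/
noncomputable def equivPair (ha : a ∈ s) (k : ℕ) :
    {P : Finpartition s // P.parts.card = k + 1 ∧ {a} ∉ P.parts} ≃
      Σ Q : {Q : Finpartition (s.erase a) // Q.parts.card = k + 1}, {p // p ∈ Q.1.parts} where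
  toFun P := ⟨⟨eraseAvoid P.1 ha P.2.2, by rw [card_eraseAvoid]; exact P.2.1⟩,
    ⟨(P.1.part a).erase a, Finset.mem_image_of_mem _ (P.1.part_mem.mpr ha)⟩⟩
  invFun Qp := ⟨insertPart ha Qp.1.1 Qp.2.1 Qp.2.2,
    by rw [card_insertPart]; exact Qp.1.2, singleton_not_mem_insertPart ha _ _ _⟩
  left_inv P := by
    ext1
    exact insertPart_eraseAvoid P.1 ha P.2.2
  right_inv := by
    rintro ⟨⟨Q, hQ⟩, ⟨p, hp⟩⟩
    have hA := eraseAvoid_insertPart ha Q p hp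
    refine Sigma.ext (Subtype.ext hA) ?_
    dsimp only
    rw [Subtype.heq_iff_coe_eq (fun x => by rw [hA])]
    show ((insertPart ha Q p hp).part a).erase a = p
    rw [part_insertPart, Finset.erase_insert (not_mem_of_mem_erasePart Q hp)]
end Rec

section Counting
variable {α : Type*} [DecidableEq α] {s : Finset α} {a : α}

lemma card_pair (ha : a ∈ s) (k : ℕ) :
    Nat.card {P : Finpartition s // P.parts.card = k + 1 ∧ {a} ∉ P.parts}
      = (k + 1) * pc (s.erase a) (k + 1) := by
  rw [Nat.card_congr (equivPair ha k), Nat.card_eq_fintype_card, Fintype.card_sigma]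
  have h : ∀ Q : {Q : Finpartition (s.erase a) // Q.parts.card = k + 1},
      Fintype.card {p // p ∈ Q.1.parts} = k + 1 := fun Q => by
    rw [Fintype.card_coe]; exact Q.2
  rw [Finset.sum_congr rfl (fun Q _ => h Q), Finset.sum_const, smul_eq_mul, mul_comm]
  rw [pc, Nat.card_eq_fintype_card]
  rfl

lemma pc_split (ha : a ∈ s) (k : ℕ) :
    pc s (k+1) = Nat.card {P : Finpartition s // P.parts.card = k + 1 ∧ {a} ∈ P.parts}
      + Nat.card {P : Finpartition s // P.parts.card = k + 1 ∧ {a} ∉ P.parts} := by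
  rw [pc, Nat.card_eq_fintype_card, Nat.card_eq_fintype_card, Nat.card_eq_fintype_card,
    Fintype.card_subtype, Fintype.card_subtype, Fintype.card_subtype,
    ← Finset.filter_filter, ← Finset.filter_filter]
  exact (Finset.card_filter_add_card_filter_not
    (p := fun P : Finpartition s => ({a} : Finset α) ∈ P.parts)).symm

lemma pc_rec (ha : a ∈ s) (k : ℕ) :
    pc s (k+1) = (k+1) * pc (s.erase a) (k+1) + pc (s.erase a) k := by
  rw [pc_split ha k, Nat.card_congr (equivSingleton ha k), card_pair ha k, add_comm]
  rfl

lemma pc_eq_StRec (s : Finset α) : ∀ k, pc s k = StRec s.card k := by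
  induction s using Finset.strongInduction with
  | _ s ih =>
    intro k
    rcases Finset.eq_empty_or_nonempty s with rfl | ⟨a, ha⟩
    · rw [pc_empty, Finset.card_empty]
      cases k <;> rfl
    · have hcard : 0 < s.card := Finset.card_pos.mpr ⟨a, ha⟩
      obtain ⟨n, hn⟩ : ∃ n, s.card = n + 1 := ⟨s.card - 1, by omega⟩
      have hce : (s.erase a).card = n := by rw [Finset.card_erase_of_mem ha, hn]; omega
      cases k with
      | zero => rw [pc_zero ⟨a, ha⟩, hn]; rfl
      | succ k =>
        rw [pc_rec ha k, ih (s.erase a) (Finset.erase_ssubset ha),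
          ih (s.erase a) (Finset.erase_ssubset ha), hce, hn]
        rfl
end Counting

end Auxiliary

lemma Stirling_eq_StRec (n k : ℕ) : Stirling n k = StRec n k := by
  have h1 : Stirling n k = pc (Finset.univ : Finset (Fin n)) k := by
    rw [Stirling, pc, ← Nat.card_coe_set_eq]
    rfl
  rw [h1, pc_eq_StRec, Finset.card_univ, Fintype.card_fin]

/-- For fixed `n`, the Stirling numbers of the second kind are strictly log-concave:
`S(n,k)² > S(n,k−1)·S(n,k+1)` for `2 ≤ k ≤ n−1`. -/
theorem stirling_SLC (n k : ℕ) (hk : 2 ≤ k) (hkn : k ≤ n - 1) :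
    Stirling n (k - 1) * Stirling n (k + 1) < (Stirling n k) ^ 2 := by
  obtain ⟨m, rfl⟩ : ∃ m, n = m + 1 := ⟨n - 1, by omega⟩
  obtain ⟨j, rfl⟩ : ∃ j, k = j + 1 := ⟨k - 1, by omega⟩
  rw [Stirling_eq_StRec, Stirling_eq_StRec, Stirling_eq_StRec]
  have h : j + 1 - 1 = j := by omega
  rw [h]
  exact StRec_slc m j (by omega) (by omega)
end

section
/- For the Stirling numbers of the second kind, the random variable Z_n with P(Z_n = k) = S(n,k)/B_n has expectation E(Z_n) = B_{n+1}/B_n − 1 and variance Var(Z_n) = B_{n+2}/B_n − (B_{n+1}/B_n)² − 1. -/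
open Finset Polynomial

namespace StirlingAux

variable {n : ℕ}

noncomputable section

def up (t : Finset (Fin n)) : Finset (Fin (n+1)) := t.map Fin.castSuccEmb

noncomputable def down (t : Finset (Fin (n+1))) : Finset (Fin n) :=
  t.preimage Fin.castSucc (Fin.castSucc_injective n).injOn

lemma mem_up {t : Finset (Fin n)} {x : Fin (n+1)} : x ∈ up t ↔ ∃ y ∈ t, y.castSucc = x := by
  simp only [up, Finset.mem_map, Fin.castSuccEmb]; rfl

lemma last_not_mem_up (t : Finset (Fin n)) : Fin.last n ∉ up t := by
  simp only [mem_up]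
  rintro ⟨y, -, hy⟩
  exact (Fin.castSucc_lt_last y).ne hy

lemma mem_down {t : Finset (Fin (n+1))} {x : Fin n} : x ∈ down t ↔ x.castSucc ∈ t := by
  simp [down]

lemma down_up (t : Finset (Fin n)) : down (up t) = t := by
  ext x; simp only [mem_down, mem_up]
  constructor
  · rintro ⟨y, hy, h⟩; rwa [(Fin.castSucc_injective n) h] at hy
  · exact fun h => ⟨x, h, rfl⟩

lemma up_injective : Function.Injective (up (n := n)) := fun s t h => by
  rw [← down_up s, h, down_up]

lemma up_empty_iff {t : Finset (Fin n)} : up t = ∅ ↔ t = ∅ := by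
  simp [up]

lemma up_disjoint_iff {s t : Finset (Fin n)} : Disjoint (up s) (up t) ↔ Disjoint s t := by
  simp only [Finset.disjoint_left, mem_up]
  constructor
  · intro h x hs ht
    exact h (a := x.castSucc) ⟨x, hs, rfl⟩ ⟨x, ht, rfl⟩
  · rintro h x ⟨y, hy, rfl⟩ ⟨z, hz, hzy⟩
    rw [(Fin.castSucc_injective n) hzy] at hz
    exact h hy hz

abbrev FP (m : ℕ) := Finpartition (Finset.univ : Finset (Fin m))

/-- parts of the extension -/
def insParts (P : FP n) (c : Option {p // p ∈ P.parts}) : Finset (Finset (Fin (n+1))) :=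
  match c with
  | none => insert {Fin.last n} (P.parts.image up)
  | some p => insert (insert (Fin.last n) (up p.1)) ((P.parts.erase p.1).image up)

lemma insParts_pd (P : FP n) (c : Option {p // p ∈ P.parts}) :
    (insParts P c : Set (Finset (Fin (n+1)))).PairwiseDisjoint id := by
  have himg : ∀ s : Finset (Finset (Fin n)), s ⊆ P.parts →
      (s.image up : Set (Finset (Fin (n+1)))).PairwiseDisjoint id := by
    intro s hs a ha b hb hab
    simp only [coe_image, Set.mem_image, mem_coe] at ha hb
    obtain ⟨a', ha', rfl⟩ := ha
    obtain ⟨b', hb', rfl⟩ := hb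
    have : a' ≠ b' := fun h => hab (by rw [h])
    exact up_disjoint_iff.2 (P.disjoint (hs ha') (hs hb') this)
  cases c with
  | none =>
    simp only [insParts]
    intro a ha b hb hab
    simp only [coe_insert, Set.mem_insert_iff, coe_image, Set.mem_image, mem_coe] at ha hb
    rcases ha with rfl | ⟨a', ha', rfl⟩ <;> rcases hb with rfl | ⟨b', hb', rfl⟩
    · exact absurd rfl hab
    · simpa [Finset.disjoint_left] using fun h => (last_not_mem_up b') h
    · simpa [Finset.disjoint_right] using fun h => (last_not_mem_up a') h
    · have : a' ≠ b' := fun h => hab (by rw [h])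
      exact up_disjoint_iff.2 (P.disjoint ha' hb' this)
  | some p =>
    simp only [insParts]
    intro a ha b hb hab
    simp only [coe_insert, Set.mem_insert_iff, coe_image, Set.mem_image, mem_coe] at ha hb
    have key : ∀ b' ∈ P.parts.erase p.1,
        Disjoint (id (insert (Fin.last n) (up p.1))) (id (up b')) := by
      intro b' hb'
      simp only [id, Finset.disjoint_left, Finset.mem_insert]
      rintro x (rfl | hx)
      · exact last_not_mem_up b'
      · intro hxb
        have hdis := up_disjoint_iff.2 (P.disjoint p.2 (mem_of_mem_erase hb')
          (fun h => (notMem_erase p.1 P.parts) (h ▸ hb')))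
        exact (Finset.disjoint_left.1 hdis) hx hxb
    rcases ha with rfl | ⟨a', ha', rfl⟩ <;> rcases hb with rfl | ⟨b', hb', rfl⟩
    · exact absurd rfl hab
    · exact key b' hb'
    · exact (key a' ha').symm
    · have : a' ≠ b' := fun h => hab (by rw [h])
      exact up_disjoint_iff.2 (P.disjoint (mem_of_mem_erase ha') (mem_of_mem_erase hb') this)

lemma insParts_sup (P : FP n) (c : Option {p // p ∈ P.parts}) :
    (insParts P c).sup id = Finset.univ := by
  apply Finset.eq_univ_of_forall
  intro x
  rw [Finset.sup_eq_biUnion, Finset.mem_biUnion]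
  rcases eq_or_ne x (Fin.last n) with rfl | hx
  · cases c with
    | none => exact ⟨{Fin.last n}, by simp [insParts], by simp⟩
    | some p => exact ⟨insert (Fin.last n) (up p.1), by simp [insParts], Finset.mem_insert_self _ _⟩
  · obtain ⟨y, rfl⟩ := Fin.exists_castSucc_eq.2 hx
    obtain ⟨t, ht, hyt⟩ := P.exists_mem (Finset.mem_univ y)
    have hyup : y.castSucc ∈ up t := mem_up.2 ⟨y, hyt, rfl⟩
    cases c with
    | none => exact ⟨up t, by simp [insParts]; exact Or.inr ⟨t, ht, rfl⟩, hyup⟩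
    | some p =>
      rcases eq_or_ne t p.1 with h | htp
      · exact ⟨insert (Fin.last n) (up p.1), by simp [insParts],
          Finset.mem_insert_of_mem (h ▸ hyup)⟩
      · exact ⟨up t, by simp [insParts]; exact Or.inr ⟨t, ⟨htp, ht⟩, rfl⟩, hyup⟩

lemma insParts_not_bot (P : FP n) (c : Option {p // p ∈ P.parts}) :
    (⊥ : Finset (Fin (n+1))) ∉ insParts P c := by
  cases c with
  | none =>
    simp only [insParts, Finset.mem_insert, Finset.mem_image, bot_eq_empty]
    rintro (h | ⟨t, ht, h⟩)
    · exact absurd h.symm (Finset.singleton_ne_empty _)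
    · exact (P.nonempty_of_mem_parts ht).ne_empty (up_empty_iff.1 h)
  | some p =>
    simp only [insParts, Finset.mem_insert, Finset.mem_image, bot_eq_empty]
    rintro (h | ⟨t, ht, h⟩)
    · exact (Finset.insert_ne_empty _ _) h.symm
    · exact (P.nonempty_of_mem_parts (mem_of_mem_erase ht)).ne_empty (up_empty_iff.1 h)

def ins (P : FP n) (c : Option {p // p ∈ P.parts}) : FP (n+1) where
  parts := insParts P c
  supIndep := Finset.supIndep_iff_pairwiseDisjoint.2 (insParts_pd P c)
  sup_parts := insParts_sup P c
  bot_notMem := insParts_not_bot P c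

lemma card_ins_none (P : FP n) : (ins P none).parts.card = P.parts.card + 1 := by
  have h1 : ({Fin.last n} : Finset (Fin (n+1))) ∉ P.parts.image up := by
    simp only [Finset.mem_image]
    rintro ⟨t, ht, h⟩
    exact last_not_mem_up t (h ▸ Finset.mem_singleton_self _)
  rw [show (ins P none).parts = insert {Fin.last n} (P.parts.image up) from rfl,
    Finset.card_insert_of_notMem h1, Finset.card_image_of_injective _ up_injective]

lemma card_ins_some (P : FP n) (p : {p // p ∈ P.parts}) :
    (ins P (some p)).parts.card = P.parts.card := by
  have h1 : insert (Fin.last n) (up p.1) ∉ (P.parts.erase p.1).image up := by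
    simp only [Finset.mem_image]
    rintro ⟨t, ht, h⟩
    exact last_not_mem_up t (h ▸ Finset.mem_insert_self _ _)
  have h2 : 1 ≤ P.parts.card := Finset.card_pos.2 ⟨p.1, p.2⟩
  rw [show (ins P (some p)).parts = insert (insert (Fin.last n) (up p.1))
      ((P.parts.erase p.1).image up) from rfl,
    Finset.card_insert_of_notMem h1, Finset.card_image_of_injective _ up_injective,
    Finset.card_erase_of_mem p.2]
  omega

lemma down_disjoint {s t : Finset (Fin (n+1))} (h : Disjoint s t) : Disjoint (down s) (down t) := by
  simp only [Finset.disjoint_left, mem_down] at h ⊢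
  intro x hx hy
  exact h hx hy

lemma up_down_eq_erase_last (t : Finset (Fin (n+1))) :
    up (down t) = t.erase (Fin.last n) := by
  ext x
  simp only [mem_up, mem_down, Finset.mem_erase]
  constructor
  · rintro ⟨y, hy, rfl⟩
    exact ⟨(Fin.castSucc_lt_last y).ne, hy⟩
  · rintro ⟨hxl, hx⟩
    obtain ⟨y, rfl⟩ := Fin.exists_castSucc_eq.2 hxl
    exact ⟨y, hx, rfl⟩

lemma resParts_pd (Q : FP (n+1)) :
    (Q.parts.image down).SupIndep id := by
  rw [Finset.supIndep_iff_pairwiseDisjoint]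
  intro a ha b hb hab
  simp only [coe_image, Set.mem_image, mem_coe] at ha hb
  obtain ⟨a', ha', rfl⟩ := ha
  obtain ⟨b', hb', rfl⟩ := hb
  have : a' ≠ b' := fun h => hab (by rw [h])
  exact down_disjoint (Q.disjoint ha' hb' this)

lemma resParts_sup (Q : FP (n+1)) :
    (Q.parts.image down).sup id = Finset.univ := by
  apply Finset.eq_univ_of_forall
  intro y
  rw [Finset.sup_eq_biUnion, Finset.mem_biUnion]
  obtain ⟨t, ht, hyt⟩ := Q.exists_mem (Finset.mem_univ y.castSucc)
  exact ⟨down t, Finset.mem_image_of_mem _ ht, mem_down.2 hyt⟩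

noncomputable def res (Q : FP (n+1)) : FP n :=
  Finpartition.ofErase (Q.parts.image down) (resParts_pd Q) (resParts_sup Q)

lemma res_parts (Q : FP (n+1)) : (res Q).parts = (Q.parts.image down).erase ∅ := rfl

lemma down_singleton_last : down ({Fin.last n} : Finset (Fin (n+1))) = ∅ := by
  ext x
  simp only [mem_down, Finset.mem_singleton, Finset.notMem_empty, iff_false]
  exact (Fin.castSucc_lt_last x).ne

lemma down_insert_last (t : Finset (Fin (n+1))) :
    down (insert (Fin.last n) t) = down t := by
  ext x
  simp only [mem_down, Finset.mem_insert]
  have := (Fin.castSucc_lt_last x).ne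
  tauto

lemma res_ins (P : FP n) (c : Option {p // p ∈ P.parts}) : res (ins P c) = P := by
  ext1
  rw [res_parts]
  cases c with
  | none =>
    have h1 : (ins P none).parts = insert {Fin.last n} (P.parts.image up) := rfl
    rw [h1, Finset.image_insert, down_singleton_last, Finset.image_image]
    have h2 : P.parts.image (down ∘ up) = P.parts := by
      rw [show down ∘ up = (id : Finset (Fin n) → Finset (Fin n)) from funext down_up,
        Finset.image_id]
    rw [h2, Finset.erase_insert (by simpa using P.not_bot_mem)]
  | some p =>
    have h1 : (ins P (some p)).parts
        = insert (insert (Fin.last n) (up p.1)) ((P.parts.erase p.1).image up) := rfl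
    rw [h1, Finset.image_insert, down_insert_last, down_up, Finset.image_image]
    have h2 : (P.parts.erase p.1).image (down ∘ up) = P.parts.erase p.1 := by
      rw [show down ∘ up = (id : Finset (Fin n) → Finset (Fin n)) from funext down_up,
        Finset.image_id]
    rw [h2, Finset.insert_erase p.2]
    exact Finset.erase_eq_of_notMem (by simpa using P.not_bot_mem)

lemma part_last_ins_none (P : FP n) :
    (ins P none).part (Fin.last n) = {Fin.last n} :=
  Finpartition.part_eq_of_mem _ (Finset.mem_insert_self _ _) (Finset.mem_singleton_self _)

lemma part_last_ins_some (P : FP n) (p : {p // p ∈ P.parts}) :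
    (ins P (some p)).part (Fin.last n) = insert (Fin.last n) (up p.1) :=
  Finpartition.part_eq_of_mem _ (Finset.mem_insert_self _ _) (Finset.mem_insert_self _ _)

lemma singleton_last_ne_insert (P : FP n) (p : {p // p ∈ P.parts}) :
    ({Fin.last n} : Finset (Fin (n+1))) ≠ insert (Fin.last n) (up p.1) := by
  intro h
  obtain ⟨y, hy⟩ := P.nonempty_of_mem_parts p.2
  have : y.castSucc ∈ insert (Fin.last n) (up p.1) :=
    Finset.mem_insert_of_mem (mem_up.2 ⟨y, hy, rfl⟩)
  rw [← h, Finset.mem_singleton] at this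
  exact (Fin.castSucc_lt_last y).ne this

lemma ins_injective : Function.Injective
    (fun x : Σ P : FP n, Option {p // p ∈ P.parts} => ins x.1 x.2) := by
  rintro ⟨P, c⟩ ⟨P', c'⟩ h
  simp only at h
  have hP : P = P' := by rw [← res_ins P c, h, res_ins]
  subst hP
  have hpart := congrArg (fun Q : FP (n+1) => Q.part (Fin.last n)) h
  try simp only at hpart
  cases c with
  | none =>
    cases c' with
    | none => rfl
    | some p' =>
      rw [part_last_ins_none, part_last_ins_some] at hpart
      exact absurd hpart (singleton_last_ne_insert P p')
  | some p =>
    cases c' with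
    | none =>
      rw [part_last_ins_none, part_last_ins_some] at hpart
      exact absurd hpart.symm (singleton_last_ne_insert P p)
    | some p' =>
      rw [part_last_ins_some, part_last_ins_some] at hpart
      have hup : up p.1 = up p'.1 := by
        have h1 := congrArg (fun s : Finset (Fin (n+1)) => s.erase (Fin.last n)) hpart
        simpa [Finset.erase_insert_of_ne, Finset.erase_eq_of_notMem,
          last_not_mem_up, Finset.erase_insert_eq_erase] using h1
      have : p.1 = p'.1 := up_injective hup
      congr
      exact Subtype.ext this

lemma ins_surjective : Function.Surjective
    (fun x : Σ P : FP n, Option {p // p ∈ P.parts} => ins x.1 x.2) := by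
  intro Q
  set L := Q.part (Fin.last n) with hLdef
  have hL : L ∈ Q.parts := Q.part_mem.2 (Finset.mem_univ _)
  have hlastL : Fin.last n ∈ L := Q.mem_part (Finset.mem_univ _)
  have hne : ∀ t ∈ Q.parts, t ≠ L → Fin.last n ∉ t := by
    intro t ht htL hlast
    exact htL (Q.eq_of_mem_parts ht hL hlast hlastL)
  have hmemQ : ∀ t ∈ Q.parts, t ≠ L → up (down t) = t := by
    intro t ht htL
    rw [up_down_eq_erase_last, Finset.erase_eq_of_notMem (hne t ht htL)]
  have hds : ∀ s ∈ Q.parts, s ≠ L → down s ≠ ∅ := by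
    intro s hs hsL h0
    have : s = ∅ := by rw [← hmemQ s hs hsL, h0]; simp [up]
    exact (Q.nonempty_of_mem_parts hs).ne_empty this
  by_cases hsingle : L = {Fin.last n}
  · refine ⟨⟨res Q, none⟩, ?_⟩
    ext1
    show insParts (res Q) none = Q.parts
    unfold insParts
    ext s
    simp only [Finset.mem_insert, res_parts, Finset.mem_image]
    constructor
    · rintro (rfl | ⟨t, ht, rfl⟩)
      · rwa [← hsingle]
      · rw [Finset.mem_erase] at ht
        obtain ⟨ht0, htmem⟩ := ht
        obtain ⟨t', ht', rfl⟩ := Finset.mem_image.1 htmem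
        have ht'L : t' ≠ L := by
          rintro rfl
          exact ht0 (by rw [hsingle, down_singleton_last])
        rw [hmemQ t' ht' ht'L]; exact ht'
    · intro hs
      by_cases hsL : s = L
      · left; rw [hsL, hsingle]
      · right
        exact ⟨down s, Finset.mem_erase_of_ne_of_mem (hds s hs hsL)
          (Finset.mem_image_of_mem _ hs), hmemQ s hs hsL⟩
  · have hdownL_ne : down L ≠ ∅ := by
      intro h0
      have h1 : L.erase (Fin.last n) = ∅ := by rw [← up_down_eq_erase_last, h0]; simp [up]
      rcases (Finset.erase_eq_empty_iff _ _).1 h1 with h | h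
      · exact (Q.nonempty_of_mem_parts hL).ne_empty h
      · exact hsingle h
    have hdownL : down L ∈ (res Q).parts := by
      rw [res_parts]
      exact Finset.mem_erase_of_ne_of_mem hdownL_ne (Finset.mem_image_of_mem _ hL)
    refine ⟨⟨res Q, some ⟨down L, hdownL⟩⟩, ?_⟩
    ext1
    show insParts (res Q) (some ⟨down L, hdownL⟩) = Q.parts
    have hIns : insert (Fin.last n) (up (down L)) = L := by
      rw [up_down_eq_erase_last, Finset.insert_erase hlastL]
    unfold insParts
    ext s
    simp only [Finset.mem_insert, Finset.mem_image]
    constructor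
    · rintro (rfl | ⟨t, ht, rfl⟩)
      · rwa [hIns]
      · have htne : t ≠ down L := Finset.ne_of_mem_erase ht
        have ht' := Finset.mem_of_mem_erase ht
        rw [res_parts, Finset.mem_erase] at ht'
        obtain ⟨ht0, htmem⟩ := ht'
        obtain ⟨t', ht'Q, rfl⟩ := Finset.mem_image.1 htmem
        have ht'L : t' ≠ L := fun h => htne (by rw [h])
        rw [hmemQ t' ht'Q ht'L]; exact ht'Q
    · intro hs
      by_cases hsL : s = L
      · left; rw [hsL]; exact hIns.symm
      · right
        have hmem : down s ∈ (res Q).parts := by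
          rw [res_parts]
          exact Finset.mem_erase_of_ne_of_mem (hds s hs hsL) (Finset.mem_image_of_mem _ hs)
        have hne2 : down s ≠ down L := by
          intro h
          obtain ⟨y, hy⟩ := Finset.nonempty_iff_ne_empty.2 hdownL_ne
          have hyS : y.castSucc ∈ s := mem_down.1 (h ▸ hy)
          have hyL : y.castSucc ∈ L := mem_down.1 hy
          exact hsL (Q.eq_of_mem_parts hs hL hyS hyL)
        exact ⟨down s, Finset.mem_erase_of_ne_of_mem hne2 hmem, hmemQ s hs hsL⟩

lemma ins_bijective : Function.Bijective
    (fun x : Σ P : FP n, Option {p // p ∈ P.parts} => ins x.1 x.2) :=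
  ⟨ins_injective, ins_surjective⟩

lemma master (f : ℕ → ℕ) :
    ∑ Q : FP (n+1), f Q.parts.card
      = ∑ P : FP n, (P.parts.card * f P.parts.card + f (P.parts.card + 1)) := by
  rw [← Function.Bijective.sum_comp (ins_bijective (n := n))
    (fun Q : FP (n+1) => f Q.parts.card)]
  rw [← Finset.univ_sigma_univ, Finset.sum_sigma]
  refine Finset.sum_congr rfl fun P _ => ?_
  rw [Fintype.sum_option (fun c : Option {p // p ∈ P.parts} => f ((ins P c).parts.card))]
  have h1 : ∀ p : {p // p ∈ P.parts}, f ((ins P (some p)).parts.card) = f P.parts.card :=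
    fun p => by rw [card_ins_some]
  rw [card_ins_none, Finset.sum_congr rfl (fun p _ => h1 p), Finset.sum_const,
    Finset.card_univ, Fintype.card_coe, smul_eq_mul]
  ring

lemma T0_succ : Fintype.card (FP (n+1))
    = (∑ Q : FP n, Q.parts.card) + Fintype.card (FP n) := by
  have h := master (n := n) (fun _ => 1)
  simpa [mul_one, Finset.sum_add_distrib, Finset.card_univ] using h

lemma T1_succ : ∑ Q : FP (n+1), Q.parts.card
    = (∑ Q : FP n, Q.parts.card ^ 2) + (∑ Q : FP n, Q.parts.card) + Fintype.card (FP n) := by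
  have h := master (n := n) (fun k => k)
  have h2 : ∀ P : FP n, P.parts.card * P.parts.card + (P.parts.card + 1)
      = P.parts.card ^ 2 + P.parts.card + 1 := fun P => by ring
  rw [h, Finset.sum_congr rfl (fun P _ => h2 P)]
  simp [Finset.sum_add_distrib, Finset.card_univ]

end
end StirlingAux

namespace StirlingAux

lemma bell_eq (m : ℕ) : Bell m = Fintype.card (FP m) := by
  rw [Bell, Set.ncard_univ, Nat.card_eq_fintype_card]

lemma stirling_eq (n k : ℕ) :
    Stirling n k = (Finset.univ.filter (fun P : FP n => P.parts.card = k)).card := by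
  rw [Stirling]
  have h : {P : FP n | P.parts.card = k}
      = ↑(Finset.univ.filter (fun P : FP n => P.parts.card = k)) := by
    ext P; simp
  rw [h, Set.ncard_coe_finset]

lemma S_sum (n : ℕ) (g : ℕ → ℝ) :
    ∑ k ∈ Finset.range (n+1), (Stirling n k : ℝ) * g k = ∑ Q : FP n, g Q.parts.card := by
  have hmap : ∀ Q : FP n, Q ∈ (Finset.univ : Finset (FP n)) →
      Q.parts.card ∈ Finset.range (n+1) := by
    intro Q _
    rw [Finset.mem_range, Nat.lt_succ_iff]
    calc Q.parts.card ≤ (Finset.univ : Finset (Fin n)).card := Q.card_parts_le_card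
      _ = n := by simp
  rw [← Finset.sum_fiberwise_of_maps_to hmap (fun Q => g Q.parts.card)]
  refine Finset.sum_congr rfl fun k _ => ?_
  rw [stirling_eq, Finset.sum_congr rfl
    (fun Q hQ => by rw [(Finset.mem_filter.1 hQ).2]), Finset.sum_const, nsmul_eq_mul]

lemma bell_pos (m : ℕ) : 0 < Bell m := by
  rw [bell_eq]
  have : Nonempty (FP m) := ⟨⊥⟩
  exact Fintype.card_pos

end StirlingAux

open StirlingAux in
/-- For the Stirling numbers of the second kind, the random variable `Z_n` with
`P(Z_n = k) = S(n,k)/B_n` has expectation `B_{n+1}/B_n − 1` and variance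
`B_{n+2}/B_n − (B_{n+1}/B_n)² − 1`. -/
theorem stirling_expectation_variance (n : ℕ) (E V : ℝ)
    (hE : E = ∑ k ∈ Finset.range (n + 1), (k : ℝ) * ((Stirling n k : ℝ) / (Bell n : ℝ)))
    (hV : V = ∑ k ∈ Finset.range (n + 1),
      ((k : ℝ) - E) ^ 2 * ((Stirling n k : ℝ) / (Bell n : ℝ))) :
    E = (Bell (n + 1) : ℝ) / (Bell n : ℝ) - 1 ∧
    V = (Bell (n + 2) : ℝ) / (Bell n : ℝ) - ((Bell (n + 1) : ℝ) / (Bell n : ℝ)) ^ 2 - 1 := by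
  set B : ℝ := (Bell n : ℝ) with hBdef
  set B1 : ℝ := (Bell (n+1) : ℝ) with hB1def
  set B2 : ℝ := (Bell (n+2) : ℝ) with hB2def
  have hBpos : (0 : ℝ) < B := by rw [hBdef]; exact_mod_cast bell_pos n
  set t1 : ℝ := ∑ Q : FP n, (Q.parts.card : ℝ) with ht1def
  set t2 : ℝ := ∑ Q : FP n, (Q.parts.card : ℝ)^2 with ht2def
  set t1' : ℝ := ∑ Q : FP (n+1), (Q.parts.card : ℝ) with ht1'def
  have h1 : B1 = t1 + B := by
    have h := T0_succ (n := n)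
    rw [← bell_eq, ← bell_eq] at h
    rw [hB1def, hBdef, ht1def, h]
    push_cast
    ring
  have h2 : B2 = t1' + B1 := by
    have h := T0_succ (n := n+1)
    rw [← bell_eq, ← bell_eq] at h
    rw [hB2def, hB1def, ht1'def, h]
    push_cast
    ring
  have h3 : t1' = t2 + t1 + B := by
    have h := T1_succ (n := n)
    rw [← bell_eq] at h
    rw [ht1'def, ht2def, ht1def, hBdef]
    exact_mod_cast h
  have hexp : ∑ Q : FP n, ((Q.parts.card : ℝ) - E)^2 = t2 - 2*E*t1 + B*E^2 := by
    have hcard : ((Fintype.card (FP n) : ℕ) : ℝ) = B := by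
      rw [hBdef, bell_eq]
    calc ∑ Q : FP n, ((Q.parts.card : ℝ) - E)^2
        = ∑ Q : FP n, ((Q.parts.card : ℝ)^2 - 2*E*(Q.parts.card : ℝ) + E^2) :=
          Finset.sum_congr rfl fun Q _ => by ring
      _ = t2 - 2*E*t1 + B*E^2 := by
          rw [Finset.sum_add_distrib, Finset.sum_sub_distrib, ← Finset.mul_sum,
            Finset.sum_const, Finset.card_univ, nsmul_eq_mul, hcard, ht2def, ht1def]
  have hE' : E = t1 / B := by
    rw [hE, ht1def, ← S_sum n (fun k => (k : ℝ)), Finset.sum_div]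
    exact Finset.sum_congr rfl fun k _ => by ring
  have hEval : E = B1 / B - 1 := by
    rw [hE', show t1 = B1 - B by linarith]
    field_simp
  have hV' : V = (t2 - 2*E*t1 + B*E^2) / B := by
    rw [hV, ← hexp, ← S_sum n (fun k => ((k : ℝ) - E)^2), Finset.sum_div]
    exact Finset.sum_congr rfl fun k _ => by ring
  refine ⟨hEval, ?_⟩
  have ht2 : t2 = B2 - 2*B1 := by linarith
  rw [hV', ht2, show t1 = B1 - B by linarith, hEval]
  field_simp
  ring
end
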